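/- arXiv:math/0701755 — 2 statements merged into one kernel-verified Lean document; each statement's English description precedes it below -/
import Mathlib

section
/- The number of oscillating tableaux of shape λ and length l, when (l − |λ|)/2 is a nonnegative integer, equals C(l, |λ|) · (l − |λ| − 1)!! · f^λ, where f^λ is the number of standard Young tableaux of shape λ and n!! = n(n−2)(n−4)···3·1 with (−1)!! = 1. -/
structure Ptn where
  parts : ℕ → ℕ
  antitone : ∀ m n : ℕ, m ≤ n → parts n ≤ parts m
  finite : ∃ N : ℕ, ∀ n : ℕ, N ≤ n → parts n = 0

namespace Ptn

/-- 1-indexed Young diagram of a partition. -/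
def ycells (l : Ptn) : Set (ℕ × ℕ) :=
  {p | 1 ≤ p.1 ∧ 1 ≤ p.2 ∧ p.2 ≤ l.parts (p.1 - 1)}

/-- number of cells, `|λ|`. -/
noncomputable def size (l : Ptn) : ℕ := l.ycells.ncard

/-- number of nonzero parts, `ℓ(λ)`. -/
noncomputable def length (l : Ptn) : ℕ := {i : ℕ | l.parts i ≠ 0}.ncard

/-- `λ` and `μ` differ by a square. -/
def Differs (l m : Ptn) : Prop :=
  ∃ i : ℕ, (l.parts i = m.parts i + 1 ∨ m.parts i = l.parts i + 1) ∧
    ∀ k : ℕ, k ≠ i → l.parts k = m.parts k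

/-- `λ` and `μ` differ by a square whose content is `d`. -/
def DiffersAt (l m : Ptn) (d : ℤ) : Prop :=
  ∃ i : ℕ, (l.parts i = m.parts i + 1 ∨ m.parts i = l.parts i + 1) ∧
    (∀ k : ℕ, k ≠ i → l.parts k = m.parts k) ∧
    (max (l.parts i) (m.parts i) : ℤ) - 1 - (i : ℤ) = d

/-- `ρ_d(λ)`: number of cells of content `d`. -/
noncomputable def rho (l : Ptn) (d : ℤ) : ℕ :=
  {p ∈ l.ycells | (p.2 : ℤ) - (p.1 : ℤ) = d}.ncard

/-- rank: number of diagonal cells. -/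
noncomputable def rank (l : Ptn) : ℕ := {i : ℕ | i < l.parts i}.ncard

/-- conjugate partition parts (0-indexed). -/
noncomputable def conj (l : Ptn) (k : ℕ) : ℕ := {i : ℕ | k < l.parts i}.ncard

end Ptn

/-- `R_d(T)`: number of points of `T` of content `d`. -/
noncomputable def Rd (T : Set (ℕ × ℕ)) (d : ℤ) : ℕ :=
  {p ∈ T | (p.2 : ℤ) - (p.1 : ℤ) = d}.ncard

/-- `c` is the `(a,b)`-complement of `l`. -/
def IsComplementOf (a b : ℕ) (c l : Ptn) : Prop :=
  ∀ k : ℕ, c.parts k = if k < a then b - l.parts (a - 1 - k) else 0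

/-- The empty partition. -/
def emptyPtn : Ptn := ⟨fun _ => 0, fun _ _ _ => le_rfl, ⟨0, fun _ _ => rfl⟩⟩

/-- `e` is an oscillating tableau of shape `lam` and length `l`: a sequence of `l+1`
partitions from `∅` to `lam` in which consecutive partitions differ by a square. -/
def IsOT (lam : Ptn) (l : ℕ) (e : List Ptn) : Prop :=
  e.length = l + 1 ∧ e.head? = some emptyPtn ∧ e.getLast? = some lam ∧
    e.Chain' Ptn.Differs

/-- The number of deletions of the oscillating tableau `e` of length `l`. -/
noncomputable def numDel (e : List Ptn) (l : ℕ) : ℕ :=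
  {k : ℕ | 1 ≤ k ∧ k ≤ l ∧ (e.getD k emptyPtn).size + 1 = (e.getD (k - 1) emptyPtn).size}.ncard

/-- `σ` is a standard Young tableau of shape `lam` (entries `1,...,|λ|`,
strictly increasing along rows and columns, `0` outside the diagram). -/
def IsSYT (lam : Ptn) (σ : ℕ × ℕ → ℕ) : Prop :=
  (∀ p : ℕ × ℕ, p ∉ lam.ycells → σ p = 0) ∧
  Set.BijOn σ lam.ycells (Set.Icc 1 lam.size) ∧
  (∀ p ∈ lam.ycells, ∀ q ∈ lam.ycells, p.1 = q.1 → p.2 < q.2 → σ p < σ q) ∧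
  (∀ p ∈ lam.ycells, ∀ q ∈ lam.ycells, p.2 = q.2 → p.1 < q.1 → σ p < σ q)

namespace Ptn

theorem ext' {l m : Ptn} (h : l.parts = m.parts) : l = m := by
  cases l; cases m; simp_all

/-- Finset of cells. -/
def cF (l : Ptn) (N : ℕ) : Finset (ℕ × ℕ) :=
  (Finset.range N).biUnion fun i => (Finset.Icc 1 (l.parts i)).image fun c => (i+1, c)

theorem cF_coe (l : Ptn) {N : ℕ} (h : ∀ n, N ≤ n → l.parts n = 0) :
    (l.cF N : Set (ℕ × ℕ)) = l.ycells := by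
  ext ⟨r, c⟩
  simp only [cF, Finset.coe_biUnion, Finset.coe_image, Finset.coe_Icc, Set.mem_iUnion,
    Set.mem_image, Finset.mem_coe, Finset.mem_range, ycells, Set.mem_setOf_eq]
  constructor
  · rintro ⟨i, hi, x, hx, he⟩
    simp only [Set.mem_Icc] at hx
    obtain ⟨h1, h2⟩ := Prod.mk.injEq .. ▸ he
    subst h1; subst h2
    exact ⟨Nat.le_add_left 1 i, hx.1, by simpa using hx.2⟩
  · rintro ⟨hr, hc, hcp⟩
    refine ⟨r - 1, ?_, c, ?_, ?_⟩
    · by_contra hN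
      push_neg at hN
      rw [h _ hN] at hcp
      omega
    · exact Set.mem_Icc.2 ⟨hc, hcp⟩
    · have : r - 1 + 1 = r := by omega
      rw [this]

theorem cF_card (l : Ptn) (N : ℕ) :
    (l.cF N).card = ∑ i ∈ Finset.range N, l.parts i := by
  rw [cF, Finset.card_biUnion]
  · refine Finset.sum_congr rfl fun i _ => ?_
    rw [Finset.card_image_of_injective _ (fun a b hab => by simpa using hab)]
    simp
  · intro i _ j _ hij
    simp only [Finset.disjoint_left, Finset.mem_image]
    rintro ⟨a, b⟩ ⟨x, hx, hxe⟩ ⟨y, hy, hye⟩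
    obtain ⟨h1, h2⟩ := Prod.mk.injEq .. ▸ hxe
    obtain ⟨h3, h4⟩ := Prod.mk.injEq .. ▸ hye
    omega

theorem ycells_finite (l : Ptn) : l.ycells.Finite := by
  obtain ⟨N, hN⟩ := l.finite
  rw [← cF_coe l hN]
  exact (l.cF N).finite_toSet

theorem size_eq_sum (l : Ptn) {N : ℕ} (h : ∀ n, N ≤ n → l.parts n = 0) :
    l.size = ∑ i ∈ Finset.range N, l.parts i := by
  rw [size, ← cF_coe l h, Set.ncard_coe_finset, cF_card]

end Ptn

namespace Ptn

theorem Differs.symm {l m : Ptn} (h : l.Differs m) : m.Differs l := by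
  obtain ⟨i, h1, h2⟩ := h
  exact ⟨i, h1.symm, fun k hk => (h2 k hk).symm⟩

theorem size_succ_of {l m : Ptn} {i : ℕ} (hi : l.parts i = m.parts i + 1)
    (hk : ∀ k : ℕ, k ≠ i → l.parts k = m.parts k) : l.size = m.size + 1 := by
  obtain ⟨Nl, hNl⟩ := l.finite
  obtain ⟨Nm, hNm⟩ := m.finite
  set N := max (max Nl Nm) (i+1) with hN
  have hNl' : ∀ n, N ≤ n → l.parts n = 0 := fun n hn => hNl n (le_trans (by omega) hn)
  have hNm' : ∀ n, N ≤ n → m.parts n = 0 := fun n hn => hNm n (le_trans (by omega) hn)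
  rw [l.size_eq_sum hNl', m.size_eq_sum hNm']
  have : ∀ j ∈ Finset.range N, l.parts j = m.parts j + (if j = i then 1 else 0) := by
    intro j _
    by_cases hj : j = i
    · subst hj; simp [hi]
    · simp [hj, hk j hj]
  rw [Finset.sum_congr rfl this, Finset.sum_add_distrib, Finset.sum_ite_eq' (Finset.range N) i]
  have : i ∈ Finset.range N := by simp only [Finset.mem_range, hN]; omega
  simp [this]

theorem Differs.size_eq {l m : Ptn} (h : l.Differs m) :
    l.size = m.size + 1 ∨ m.size = l.size + 1 := by
  obtain ⟨i, h1, h2⟩ := h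
  rcases h1 with h1 | h1
  · exact Or.inl (size_succ_of h1 h2)
  · exact Or.inr (size_succ_of h1 fun k hk => (h2 k hk).symm)

theorem parts_le_size (l : Ptn) (i : ℕ) : l.parts i ≤ l.size := by
  obtain ⟨Nl, hNl⟩ := l.finite
  set N := max Nl (i+1) with hN
  have hNl' : ∀ n, N ≤ n → l.parts n = 0 := fun n hn => hNl n (le_trans (by omega) hn)
  rw [l.size_eq_sum hNl']
  exact Finset.single_le_sum (fun j _ => Nat.zero_le _) (by simp only [Finset.mem_range, hN]; omega)

theorem parts_eq_zero_of_size_le {l : Ptn} {i : ℕ} (h : l.size ≤ i) : l.parts i = 0 := by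
  by_contra hp
  obtain ⟨Nl, hNl⟩ := l.finite
  set N := max Nl (i+1) with hN
  have hNl' : ∀ n, N ≤ n → l.parts n = 0 := fun n hn => hNl n (le_trans (by omega) hn)
  have hsum := l.size_eq_sum hNl'
  have hsub : Finset.range (i+1) ⊆ Finset.range N := by
    intro x hx; simp at hx ⊢; omega
  have h1 : ∑ j ∈ Finset.range (i+1), l.parts j ≤ l.size := by
    rw [hsum]; exact Finset.sum_le_sum_of_subset hsub
  have h2 : ∀ j ∈ Finset.range (i+1), 1 ≤ l.parts j := by
    intro j hj
    simp at hj
    have := l.antitone j i (by omega)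
    omega
  have h3 : (i+1 : ℕ) ≤ ∑ j ∈ Finset.range (i+1), l.parts j := by
    calc (i+1 : ℕ) = ∑ _j ∈ Finset.range (i+1), 1 := by simp
    _ ≤ _ := Finset.sum_le_sum h2
  omega

theorem size_emptyPtn : emptyPtn.size = 0 := by
  rw [size_eq_sum emptyPtn (N := 0) (fun n _ => rfl)]
  simp

theorem eq_empty_of_size_eq_zero {l : Ptn} (h : l.size = 0) : l = emptyPtn := by
  refine ext' (funext fun i => ?_)
  have := parts_eq_zero_of_size_le (l := l) (i := i) (by omega)
  simpa [emptyPtn] using this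

theorem finite_size_le (n : ℕ) : {μ : Ptn | μ.size ≤ n}.Finite := by
  rw [← Set.finite_coe_iff]
  refine Finite.of_injective (fun μ => (fun i : Fin n =>
    (⟨μ.1.parts i, Nat.lt_succ_of_le ((μ.1.parts_le_size i).trans μ.2)⟩ : Fin (n+1)))) ?_
  rintro ⟨μ, hμ⟩ ⟨ν, hν⟩ h
  simp only [Set.mem_setOf_eq] at hμ hν
  have h' : ∀ i : Fin n, μ.parts i = ν.parts i := fun i => congrArg Fin.val (congrFun h i)
  refine Subtype.ext (ext' (funext fun i => ?_))
  show μ.parts i = ν.parts i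
  by_cases hi : i < n
  · exact h' ⟨i, hi⟩
  · rw [parts_eq_zero_of_size_le (by omega), parts_eq_zero_of_size_le (by omega)]

theorem finite_differs (l : Ptn) : {μ : Ptn | l.Differs μ}.Finite := by
  refine (finite_size_le (l.size + 1)).subset ?_
  intro μ hμ
  simp only [Set.mem_setOf_eq] at hμ ⊢
  rcases hμ.size_eq with h | h <;> omega

end Ptn

open Classical in
theorem ncard_biUnion {α ι : Type*} (s : Finset ι) (f : ι → Set α)
    (hf : ∀ i ∈ s, (f i).Finite)
    (hd : ∀ i ∈ s, ∀ j ∈ s, i ≠ j → Disjoint (f i) (f j)) :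
    (⋃ i ∈ s, f i).ncard = ∑ i ∈ s, (f i).ncard := by
  classical
  induction s using Finset.induction_on with
  | empty => simp
  | @insert a s ha ih =>
    have hfa : (f a).Finite := hf a (Finset.mem_insert_self a s)
    have hfs : ∀ i ∈ s, (f i).Finite := fun i hi => hf i (Finset.mem_insert_of_mem hi)
    have hUfin : (⋃ i ∈ s, f i).Finite := Set.Finite.biUnion s.finite_toSet hfs
    have hdisj : Disjoint (f a) (⋃ i ∈ s, f i) := by
      rw [Set.disjoint_iUnion₂_right]
      intro i hi
      exact hd a (Finset.mem_insert_self a s) i (Finset.mem_insert_of_mem hi)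
        (fun h => ha (h ▸ hi))
    rw [Finset.set_biUnion_insert, Set.ncard_union_eq hdisj hfa hUfin,
      Finset.sum_insert ha, ih hfs
        (fun i hi j hj hij => hd i (Finset.mem_insert_of_mem hi) j (Finset.mem_insert_of_mem hj) hij)]

theorem isOT_zero_iff (lam : Ptn) (e : List Ptn) :
    IsOT lam 0 e ↔ lam = emptyPtn ∧ e = [emptyPtn] := by
  constructor
  · rintro ⟨h1, h2, h3, _⟩
    match e, h1 with
    | [x], _ =>
      simp only [List.head?_cons, Option.some.injEq] at h2
      simp only [List.getLast?_singleton, Option.some.injEq] at h3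
      subst h2; exact ⟨h3.symm, rfl⟩
  · rintro ⟨rfl, rfl⟩
    exact ⟨rfl, rfl, rfl, List.isChain_singleton _⟩

theorem isOT_succ_iff (lam : Ptn) (l : ℕ) (e : List Ptn) :
    IsOT lam (l+1) e ↔ ∃ μ : Ptn, μ.Differs lam ∧ IsOT μ l e.dropLast ∧
      e = e.dropLast ++ [lam] := by
  constructor
  · rintro ⟨h1, h2, h3, h4⟩
    have hne : e ≠ [] := by intro h; simp [h] at h1
    have he : e.dropLast ++ [lam] = e := List.dropLast_append_getLast? _ h3
    have hlen : e.dropLast.length = l + 1 := by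
      simp [List.length_dropLast, h1]
    have hdne : e.dropLast ≠ [] := by
      intro h; rw [h] at hlen; simp at hlen
    obtain ⟨μ, hμ⟩ := List.getLast?_isSome.2 hdne |> Option.isSome_iff_exists.1
    have hchain : List.Chain' Ptn.Differs (e.dropLast ++ [lam]) := by rw [he]; exact h4
    unfold List.Chain' at hchain
    rw [List.isChain_append] at hchain
    refine ⟨μ, ?_, ⟨hlen, ?_, hμ, hchain.1⟩, he.symm⟩
    · have := hchain.2.2 μ hμ lam rfl
      exact this
    · cases hd : e.dropLast with
      | nil => exact absurd hd hdne
      | cons x xs =>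
        have he2 : e = x :: (xs ++ [lam]) := by rw [← he, hd]; simp
        rw [he2] at h2
        simp only [List.head?_cons, Option.some.injEq] at h2 ⊢
        exact h2
  · rintro ⟨μ, hd, ⟨h1, h2, h3, h4⟩, he⟩
    have hdne : e.dropLast ≠ [] := by intro h; rw [h] at h1; simp at h1
    constructor
    · rw [he]; simp [h1]
    refine ⟨?_, ?_, ?_⟩
    · rw [he, ← h2]
      cases hd' : e.dropLast with
      | nil => exact absurd hd' hdne
      | cons x xs => simp [hd']
    · rw [he]
      simp [List.getLast?_append]
    · rw [he]; unfold List.Chain'; rw [List.isChain_append]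
      exact ⟨h4, List.isChain_singleton _, fun x hx y hy => by
        rw [h3] at hx
        simp at hx hy
        subst hx; subst hy
        exact hd⟩

theorem IsOT.size_le {lam : Ptn} {l : ℕ} {e : List Ptn} (h : IsOT lam l e) :
    lam.size ≤ l ∧ Even (l - lam.size) := by
  induction l generalizing lam e with
  | zero =>
    obtain ⟨rfl, -⟩ := (isOT_zero_iff lam e).1 h
    simp [Ptn.size_emptyPtn]
  | succ l ih =>
    obtain ⟨μ, hd, hOT, -⟩ := (isOT_succ_iff lam l e).1 h
    obtain ⟨h1, h2⟩ := ih hOT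
    rw [Nat.even_iff] at h2 ⊢
    rcases hd.size_eq with h3 | h3 <;> omega

theorem OT_finite (lam : Ptn) (l : ℕ) : {e | IsOT lam l e}.Finite := by
  induction l generalizing lam with
  | zero =>
    refine (Set.finite_singleton [emptyPtn]).subset fun e he => ?_
    exact ((isOT_zero_iff lam e).1 he).2
  | succ l ih =>
    have hF : {μ : Ptn | μ.Differs lam}.Finite := by
      refine (Ptn.finite_differs lam).subset fun μ hμ => hμ.symm
    refine (Set.Finite.biUnion hF (fun μ _ => (ih μ).image (· ++ [lam]))).subset ?_
    intro e he
    obtain ⟨μ, hd, hOT, he2⟩ := (isOT_succ_iff lam l e).1 he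
    exact Set.mem_biUnion hd ⟨e.dropLast, hOT, he2.symm⟩

open Classical in
/-- Neighbours of a partition. -/
noncomputable def nbrs (lam : Ptn) : Finset Ptn := (Ptn.finite_differs lam).toFinset

theorem mem_nbrs {lam μ : Ptn} : μ ∈ nbrs lam ↔ lam.Differs μ := by
  simp [nbrs, Set.Finite.mem_toFinset]

theorem OT_rec (lam : Ptn) (l : ℕ) :
    {e | IsOT lam (l+1) e}.ncard = ∑ μ ∈ nbrs lam, {e | IsOT μ l e}.ncard := by
  have hset : {e | IsOT lam (l+1) e}
      = ⋃ μ ∈ nbrs lam, (· ++ [lam]) '' {e | IsOT μ l e} := by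
    ext e
    simp only [Set.mem_setOf_eq, Set.mem_iUnion, Set.mem_image, exists_prop]
    rw [isOT_succ_iff]
    constructor
    · rintro ⟨μ, hd, hOT, he⟩
      exact ⟨μ, mem_nbrs.2 hd.symm, e.dropLast, hOT, he.symm⟩
    · rintro ⟨μ, hμ, e', hOT, he⟩
      have hdl : e.dropLast = e' := by rw [← he, List.dropLast_concat]
      exact ⟨μ, (mem_nbrs.1 hμ).symm, hdl ▸ hOT, by rw [hdl, ← he]⟩
  rw [hset, ncard_biUnion]
  · refine Finset.sum_congr rfl fun μ _ => ?_
    exact Set.ncard_image_of_injective _ fun a b hab => by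
      have := congrArg List.dropLast hab
      simpa [List.dropLast_concat] using this
  · exact fun μ _ => (OT_finite μ l).image _
  · intro i _ j _ hij
    rw [Set.disjoint_left]
    rintro e ⟨a, ha, rfl⟩ ⟨b, hb, hab⟩
    have hb' : b = a := by
      have := congrArg List.dropLast hab
      simpa [List.dropLast_concat] using this
    subst hb'
    have h1 : b.getLast? = some i := ha.2.2.1
    have h2 : b.getLast? = some j := hb.2.2.1
    rw [h1] at h2
    exact hij (Option.some_injective _ h2)

theorem IsSYT.le_size {lam : Ptn} {σ : ℕ × ℕ → ℕ} (h : IsSYT lam σ) (p : ℕ × ℕ) :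
    σ p ≤ lam.size := by
  by_cases hp : p ∈ lam.ycells
  · exact (h.2.1.1 hp).2
  · rw [h.1 p hp]; exact Nat.zero_le _

theorem SYT_finite (lam : Ptn) : {σ : ℕ × ℕ → ℕ | IsSYT lam σ}.Finite := by
  rw [← Set.finite_coe_iff]
  have : Finite ↥lam.ycells := lam.ycells_finite.to_subtype
  refine Finite.of_injective (fun σ => (fun p : ↥lam.ycells =>
    (⟨σ.1 p, Nat.lt_succ_of_le (σ.2.le_size p)⟩ : Fin (lam.size + 1)))) ?_
  rintro ⟨σ, hσ⟩ ⟨τ, hτ⟩ h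
  have h' : ∀ p : ↥lam.ycells, σ p = τ p := fun p => congrArg Fin.val (congrFun h p)
  refine Subtype.ext (funext fun p => ?_)
  show σ p = τ p
  by_cases hp : p ∈ lam.ycells
  · exact h' ⟨p, hp⟩
  · rw [hσ.1 p hp, hτ.1 p hp]

theorem ycells_emptyPtn : emptyPtn.ycells = ∅ := by
  ext ⟨r, c⟩
  simp [Ptn.ycells, emptyPtn]
  omega

theorem SYT_empty : {σ : ℕ × ℕ → ℕ | IsSYT emptyPtn σ} = {fun _ => 0} := by
  ext σ
  simp only [Set.mem_setOf_eq, Set.mem_singleton_iff]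
  constructor
  · intro h
    exact funext fun p => h.1 p (by rw [ycells_emptyPtn]; exact Set.notMem_empty p)
  · rintro rfl
    refine ⟨fun p _ => rfl, ?_, ?_, ?_⟩
    · rw [ycells_emptyPtn, Ptn.size_emptyPtn]
      constructor
      · intro p hp; exact absurd hp (Set.notMem_empty p)
      constructor
      · intro p hp; exact absurd hp (Set.notMem_empty p)
      · intro x hx
        simp only [Set.mem_Icc] at hx
        omega
    · intro p hp; rw [ycells_emptyPtn] at hp; exact absurd hp (Set.notMem_empty p)
    · intro p hp; rw [ycells_emptyPtn] at hp; exact absurd hp (Set.notMem_empty p)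

/-- Number of standard Young tableaux. -/
noncomputable def fSYT (lam : Ptn) : ℕ := {σ : ℕ × ℕ → ℕ | IsSYT lam σ}.ncard

theorem fSYT_empty : fSYT emptyPtn = 1 := by
  rw [fSYT, SYT_empty, Set.ncard_singleton]

open Classical in
noncomputable def downNbrs (lam : Ptn) : Finset Ptn :=
  (nbrs lam).filter (fun μ => μ.size + 1 = lam.size)

open Classical in
noncomputable def upNbrs (lam : Ptn) : Finset Ptn :=
  (nbrs lam).filter (fun μ => lam.size + 1 = μ.size)

theorem mem_downNbrs {lam μ : Ptn} :
    μ ∈ downNbrs lam ↔ lam.Differs μ ∧ μ.size + 1 = lam.size := by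
  simp [downNbrs, Finset.mem_filter, mem_nbrs]

theorem mem_upNbrs {lam μ : Ptn} :
    μ ∈ upNbrs lam ↔ lam.Differs μ ∧ lam.size + 1 = μ.size := by
  simp [upNbrs, Finset.mem_filter, mem_nbrs]

theorem sum_nbrs_split (lam : Ptn) (g : Ptn → ℕ) :
    ∑ μ ∈ nbrs lam, g μ = ∑ μ ∈ downNbrs lam, g μ + ∑ μ ∈ upNbrs lam, g μ := by
  classical
  rw [downNbrs, upNbrs, ← Finset.sum_filter_add_sum_filter_not (nbrs lam)
    (fun μ => μ.size + 1 = lam.size) g]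
  congr 1
  refine Finset.sum_congr ?_ fun _ _ => rfl
  ext μ
  simp only [Finset.mem_filter]
  constructor
  · rintro ⟨h1, h2⟩
    refine ⟨h1, ?_⟩
    rcases (mem_nbrs.1 h1).size_eq with h | h <;> omega
  · rintro ⟨h1, h2⟩
    refine ⟨h1, ?_⟩
    rcases (mem_nbrs.1 h1).size_eq with h | h <;> omega

theorem mem_downNbrs_iff_row {lam μ : Ptn} :
    μ ∈ downNbrs lam ↔ ∃ i : ℕ, lam.parts i = μ.parts i + 1 ∧
      ∀ k : ℕ, k ≠ i → lam.parts k = μ.parts k := by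
  rw [mem_downNbrs]
  constructor
  · rintro ⟨⟨i, hor, hk⟩, hs⟩
    rcases hor with h | h
    · exact ⟨i, h, hk⟩
    · exfalso
      have := Ptn.size_succ_of h (fun k hk' => (hk k hk').symm)
      omega
  · rintro ⟨i, hi, hk⟩
    exact ⟨⟨i, Or.inl hi, hk⟩, by have := Ptn.size_succ_of hi hk; omega⟩

theorem mem_upNbrs_iff_row {lam μ : Ptn} :
    μ ∈ upNbrs lam ↔ ∃ i : ℕ, μ.parts i = lam.parts i + 1 ∧
      ∀ k : ℕ, k ≠ i → lam.parts k = μ.parts k := by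
  rw [mem_upNbrs]
  constructor
  · rintro ⟨⟨i, hor, hk⟩, hs⟩
    rcases hor with h | h
    · exfalso
      have := Ptn.size_succ_of h hk
      omega
    · exact ⟨i, h, hk⟩
  · rintro ⟨i, hi, hk⟩
    exact ⟨⟨i, Or.inr hi, hk⟩,
      by have := Ptn.size_succ_of hi (fun k hk' => (hk k hk').symm); omega⟩

theorem upNbrs_downNbrs_symm {lam μ : Ptn} : μ ∈ upNbrs lam ↔ lam ∈ downNbrs μ := by
  rw [mem_upNbrs_iff_row, mem_downNbrs_iff_row]
  constructor
  · rintro ⟨i, hi, hk⟩; exact ⟨i, hi, fun k h => (hk k h).symm⟩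
  · rintro ⟨i, hi, hk⟩; exact ⟨i, hi, fun k h => (hk k h).symm⟩

theorem cells_insert {lam μ : Ptn} {i : ℕ} (hi : lam.parts i = μ.parts i + 1)
    (hk : ∀ k : ℕ, k ≠ i → lam.parts k = μ.parts k) :
    lam.ycells = insert (i+1, lam.parts i) μ.ycells ∧ (i+1, lam.parts i) ∉ μ.ycells := by
  constructor
  · ext ⟨r, c⟩
    simp only [Ptn.ycells, Set.mem_setOf_eq, Set.mem_insert_iff, Prod.mk.injEq]
    by_cases hr : r = i + 1
    · subst hr
      simp only [Nat.add_sub_cancel]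
      constructor
      · rintro ⟨h1, h2, h3⟩
        by_cases hc : c = lam.parts i
        · exact Or.inl ⟨trivial, by omega⟩
        · exact Or.inr ⟨h1, h2, by omega⟩
      · rintro (⟨-, rfl⟩ | ⟨h1, h2, h3⟩)
        · exact ⟨by omega, by omega, le_rfl⟩
        · exact ⟨h1, h2, by omega⟩
    · have hne : r - 1 ≠ i ∨ r = 0 := by omega
      constructor
      · rintro ⟨h1, h2, h3⟩
        rcases hne with h | h
        · exact Or.inr ⟨h1, h2, by rw [← hk _ h]; exact h3⟩
        · omega
      · rintro (⟨h, -⟩ | ⟨h1, h2, h3⟩)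
        · exact absurd h hr
        · rcases hne with h | h
          · exact ⟨h1, h2, by rw [hk _ h]; exact h3⟩
          · omega
  · simp only [Ptn.ycells, Set.mem_setOf_eq, Nat.add_sub_cancel, not_and]
    intro _ _
    omega

noncomputable def rowDiff (lam μ : Ptn) : ℕ := sInf {i | lam.parts i ≠ μ.parts i}

theorem rowDiff_eq {lam μ : Ptn} {i : ℕ} (hi : lam.parts i = μ.parts i + 1)
    (hk : ∀ k : ℕ, k ≠ i → lam.parts k = μ.parts k) : rowDiff lam μ = i := by
  have hset : {j | lam.parts j ≠ μ.parts j} = {i} := by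
    ext j
    simp only [Set.mem_setOf_eq, Set.mem_singleton_iff]
    constructor
    · intro h; by_contra hj; exact h (hk j hj)
    · rintro rfl; omega
  rw [rowDiff, hset, csInf_singleton]

/-- The cell by which `lam` exceeds `μ ∈ downNbrs lam`. -/
noncomputable def addCell (lam μ : Ptn) : ℕ × ℕ :=
  (rowDiff lam μ + 1, lam.parts (rowDiff lam μ))

theorem addCell_spec {lam μ : Ptn} (h : μ ∈ downNbrs lam) :
    lam.ycells = insert (addCell lam μ) μ.ycells ∧ addCell lam μ ∉ μ.ycells := by
  obtain ⟨i, hi, hk⟩ := mem_downNbrs_iff_row.1 h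
  rw [addCell, rowDiff_eq hi hk]
  exact cells_insert hi hk

theorem downNbrs_inj {lam μ ν : Ptn} (hμ : μ ∈ downNbrs lam) (hν : ν ∈ downNbrs lam)
    (h : addCell lam μ = addCell lam ν) : μ = ν := by
  obtain ⟨i, hi, hk⟩ := mem_downNbrs_iff_row.1 hμ
  obtain ⟨j, hj, hl⟩ := mem_downNbrs_iff_row.1 hν
  rw [addCell, addCell, rowDiff_eq hi hk, rowDiff_eq hj hl] at h
  obtain ⟨h1, -⟩ := Prod.mk.injEq .. ▸ h
  have hij : i = j := by omega
  subst hij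
  refine Ptn.ext' (funext fun k => ?_)
  by_cases hki : k = i
  · subst hki; omega
  · rw [← hk k hki, ← hl k hki]

/-- Remove a box from row `i`. -/
def decP (lam : Ptn) (i : ℕ) (h : lam.parts (i+1) < lam.parts i) : Ptn where
  parts j := if j = i then lam.parts i - 1 else lam.parts j
  antitone := by
    intro m n hmn
    have ham := lam.antitone m n hmn
    show (if n = i then lam.parts i - 1 else lam.parts n)
      ≤ (if m = i then lam.parts i - 1 else lam.parts m)
    by_cases hm : m = i <;> by_cases hn : n = i
    · simp [hm, hn]
    · rw [if_neg hn, if_pos hm]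
      have := lam.antitone (i+1) n (by omega)
      omega
    · rw [if_pos hn, if_neg hm]
      have := lam.antitone m i (by omega)
      omega
    · rw [if_neg hn, if_neg hm]
      exact ham
  finite := by
    obtain ⟨N, hN⟩ := lam.finite
    refine ⟨max N (i+1), fun n hn => ?_⟩
    have hni : n ≠ i := by omega
    simp only [hni, if_neg]
    exact hN n (by omega)

theorem mem_ycells_iff {lam : Ptn} {q : ℕ × ℕ} :
    q ∈ lam.ycells ↔ 1 ≤ q.1 ∧ 1 ≤ q.2 ∧ q.2 ≤ lam.parts (q.1 - 1) := Iff.rfl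

theorem extend_SYT {lam μ : Ptn} {i : ℕ} (hi : lam.parts i = μ.parts i + 1)
    (hk : ∀ k : ℕ, k ≠ i → lam.parts k = μ.parts k)
    {σ : ℕ × ℕ → ℕ} (hσ : IsSYT μ σ) :
    IsSYT lam (Function.update σ (i+1, lam.parts i) lam.size) := by
  set p : ℕ × ℕ := (i+1, lam.parts i) with hp
  obtain ⟨hins, hpnot⟩ := cells_insert hi hk
  rw [← hp] at hins hpnot
  have hsz : lam.size = μ.size + 1 := Ptn.size_succ_of hi hk
  have hpmem : p ∈ lam.ycells := by rw [hins]; exact Set.mem_insert _ _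
  have hfact1 : lam.parts (i+1) < lam.parts i := by
    have h1 := μ.antitone i (i+1) (by omega)
    have h2 := hk (i+1) (by omega)
    omega
  have hq_ne : ∀ q ∈ μ.ycells, q ≠ p := fun q hq h => hpnot (h ▸ hq)
  have happ : ∀ q, q ≠ p → Function.update σ p lam.size q = σ q :=
    fun q hq => Function.update_of_ne hq _ _
  have happ_p : Function.update σ p lam.size p = lam.size := Function.update_self _ _ _
  have hvals : ∀ q ∈ μ.ycells, 1 ≤ σ q ∧ σ q ≤ μ.size := fun q hq =>
    Set.mem_Icc.1 (hσ.2.1.1 hq)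
  refine ⟨?_, ⟨?_, ?_, ?_⟩, ?_, ?_⟩
  · intro q hq
    have h1 : q ≠ p := fun h => hq (h ▸ hpmem)
    have h2 : q ∉ μ.ycells := fun h => hq (by rw [hins]; exact Set.mem_insert_of_mem _ h)
    rw [happ q h1]
    exact hσ.1 q h2
  · -- MapsTo
    intro q hq
    rw [hins, Set.mem_insert_iff] at hq
    rcases hq with rfl | hq
    · rw [happ_p]
      exact Set.mem_Icc.2 ⟨by omega, le_rfl⟩
    · rw [happ q (hq_ne q hq)]
      have := hvals q hq
      exact Set.mem_Icc.2 ⟨this.1, by omega⟩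
  · -- InjOn
    intro q hq q' hq' heq
    rw [hins, Set.mem_insert_iff] at hq hq'
    rcases hq with rfl | hq <;> rcases hq' with rfl | hq'
    · rfl
    · rw [happ_p, happ q' (hq_ne q' hq')] at heq
      have := hvals q' hq'
      omega
    · rw [happ_p, happ q (hq_ne q hq)] at heq
      have := hvals q hq
      omega
    · rw [happ q (hq_ne q hq), happ q' (hq_ne q' hq')] at heq
      exact hσ.2.1.2.1 hq hq' heq
  · -- SurjOn
    intro k hkm
    rw [Set.mem_Icc] at hkm
    by_cases hkn : k = lam.size
    · exact ⟨p, hpmem, by rw [happ_p, hkn]⟩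
    · have : k ∈ Set.Icc 1 μ.size := Set.mem_Icc.2 ⟨hkm.1, by omega⟩
      obtain ⟨q, hq, hqv⟩ := hσ.2.1.2.2 this
      exact ⟨q, by rw [hins]; exact Set.mem_insert_of_mem _ hq,
        by rw [happ q (hq_ne q hq), hqv]⟩
  · -- rows
    intro q hq q' hq' hrow hcol
    rw [hins, Set.mem_insert_iff] at hq hq'
    rcases hq with rfl | hq <;> rcases hq' with rfl | hq'
    · omega
    · -- q = p, q' in μ to the right: impossible
      exfalso
      have hm := hq'
      rw [mem_ycells_iff] at hm
      have hq'1 : q'.1 - 1 = i := by rw [← hrow]; simp [hp]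
      rw [hq'1] at hm
      have : q'.2 ≤ lam.parts i - 1 := by omega
      have hpc : p.2 = lam.parts i := rfl
      omega
    · rw [happ q (hq_ne q hq), happ_p]
      have := hvals q hq
      omega
    · rw [happ q (hq_ne q hq), happ q' (hq_ne q' hq')]
      exact hσ.2.2.1 q hq q' hq' hrow hcol
  · -- cols
    intro q hq q' hq' hcol hrow
    rw [hins, Set.mem_insert_iff] at hq hq'
    rcases hq with rfl | hq <;> rcases hq' with rfl | hq'
    · omega
    · -- q = p, q' in μ below: impossible
      exfalso
      have hm := hq'
      rw [mem_ycells_iff] at hm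
      have hle : i + 1 ≤ q'.1 - 1 := by
        have : p.1 = i + 1 := rfl
        omega
      have h1 := μ.antitone (i+1) (q'.1 - 1) hle
      have h2 := hk (i+1) (by omega)
      have hpc : p.2 = lam.parts i := rfl
      omega
    · rw [happ q (hq_ne q hq), happ_p]
      have := hvals q hq
      omega
    · rw [happ q (hq_ne q hq), happ q' (hq_ne q' hq')]
      exact hσ.2.2.2 q hq q' hq' hcol hrow

theorem restrict_SYT {lam : Ptn} {σ : ℕ × ℕ → ℕ} (hσ : IsSYT lam σ) (h0 : lam.size ≠ 0) :
    ∃ μ ∈ downNbrs lam, ∃ τ : ℕ × ℕ → ℕ, IsSYT μ τ ∧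
      σ = Function.update τ (addCell lam μ) lam.size := by
  obtain ⟨q, hq, hqv⟩ := hσ.2.1.2.2 (Set.mem_Icc.2 ⟨by omega, le_rfl⟩ :
    lam.size ∈ Set.Icc 1 lam.size)
  obtain ⟨r, c⟩ := q
  have hmem : 1 ≤ r ∧ 1 ≤ c ∧ c ≤ lam.parts (r-1) := hq
  have hvals : ∀ x ∈ lam.ycells, 1 ≤ σ x ∧ σ x ≤ lam.size := fun x hx =>
    Set.mem_Icc.1 (hσ.2.1.1 hx)
  have hc : c = lam.parts (r-1) := by
    by_contra hcc
    have hq' : (r, c+1) ∈ lam.ycells := ⟨hmem.1, by omega, by simp; omega⟩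
    have := hσ.2.2.1 (r, c) hq (r, c+1) hq' rfl (by omega)
    have h2 := hvals _ hq'
    omega
  have hrowlt : lam.parts r < c := by
    by_contra hcc
    have hq' : (r+1, c) ∈ lam.ycells := ⟨by omega, hmem.2.1, by simp; omega⟩
    have := hσ.2.2.2 (r, c) hq (r+1, c) hq' rfl (by omega)
    have h2 := hvals _ hq'
    omega
  set i : ℕ := r - 1 with hidef
  have hr1 : i + 1 = r := by omega
  have hdec : lam.parts (i+1) < lam.parts i := by rw [hr1, ← hc]; exact hrowlt
  set μ : Ptn := decP lam i hdec with hμdef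
  have hμi : μ.parts i = lam.parts i - 1 := by simp [hμdef, decP]
  have hμk : ∀ k : ℕ, k ≠ i → lam.parts k = μ.parts k := by
    intro k hki
    simp [hμdef, decP, hki]
  have hi : lam.parts i = μ.parts i + 1 := by
    have : 1 ≤ lam.parts i := by omega
    omega
  have hμd : μ ∈ downNbrs lam := mem_downNbrs_iff_row.2 ⟨i, hi, hμk⟩
  have haddCell : addCell lam μ = (r, c) := by
    rw [addCell, rowDiff_eq hi hμk]
    exact Prod.ext (by omega) (by rw [← hc])
  obtain ⟨hins, hpnot⟩ := cells_insert hi hμk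
  have hpeq : ((i+1 : ℕ), lam.parts i) = ((r : ℕ), c) := by
    exact Prod.ext (by omega) (by rw [← hc])
  rw [hpeq] at hins hpnot
  have hsz : lam.size = μ.size + 1 := Ptn.size_succ_of hi hμk
  refine ⟨μ, hμd, Function.update σ (r, c) 0, ⟨?_, ⟨?_, ?_, ?_⟩, ?_, ?_⟩, ?_⟩
  · intro x hx
    by_cases hxp : x = (r, c)
    · rw [hxp, Function.update_self]
    · rw [Function.update_of_ne hxp]
      refine hσ.1 x fun hxl => ?_
      rw [hins, Set.mem_insert_iff] at hxl
      exact hx ((hxl.resolve_left hxp) )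
  · -- MapsTo
    intro x hx
    have hxp : x ≠ (r, c) := fun h => hpnot (h ▸ hx)
    rw [Function.update_of_ne hxp]
    have hxl : x ∈ lam.ycells := by rw [hins]; exact Set.mem_insert_of_mem _ hx
    have h1 := hvals x hxl
    have h2 : σ x ≠ lam.size := fun h =>
      hxp (hσ.2.1.2.1 hxl hq (by rw [h, hqv]))
    exact Set.mem_Icc.2 ⟨h1.1, by omega⟩
  · -- InjOn
    intro x hx y hy heq
    have hxp : x ≠ (r, c) := fun h => hpnot (h ▸ hx)
    have hyp : y ≠ (r, c) := fun h => hpnot (h ▸ hy)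
    rw [Function.update_of_ne hxp, Function.update_of_ne hyp] at heq
    exact hσ.2.1.2.1 (by rw [hins]; exact Set.mem_insert_of_mem _ hx)
      (by rw [hins]; exact Set.mem_insert_of_mem _ hy) heq
  · -- SurjOn
    intro k hkm
    rw [Set.mem_Icc] at hkm
    obtain ⟨x, hx, hxv⟩ := hσ.2.1.2.2 (Set.mem_Icc.2 ⟨hkm.1, by omega⟩ :
      k ∈ Set.Icc 1 lam.size)
    have hxp : x ≠ (r, c) := by
      intro h
      rw [h, hqv] at hxv
      omega
    refine ⟨x, ?_, by rw [Function.update_of_ne hxp, hxv]⟩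
    rw [hins, Set.mem_insert_iff] at hx
    exact hx.resolve_left hxp
  · -- rows
    intro x hx y hy h1 h2
    have hxp : x ≠ (r, c) := fun h => hpnot (h ▸ hx)
    have hyp : y ≠ (r, c) := fun h => hpnot (h ▸ hy)
    rw [Function.update_of_ne hxp, Function.update_of_ne hyp]
    exact hσ.2.2.1 x (by rw [hins]; exact Set.mem_insert_of_mem _ hx)
      y (by rw [hins]; exact Set.mem_insert_of_mem _ hy) h1 h2
  · -- cols
    intro x hx y hy h1 h2
    have hxp : x ≠ (r, c) := fun h => hpnot (h ▸ hx)
    have hyp : y ≠ (r, c) := fun h => hpnot (h ▸ hy)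
    rw [Function.update_of_ne hxp, Function.update_of_ne hyp]
    exact hσ.2.2.2 x (by rw [hins]; exact Set.mem_insert_of_mem _ hx)
      y (by rw [hins]; exact Set.mem_insert_of_mem _ hy) h1 h2
  · -- σ = update τ p n
    rw [haddCell]
    funext x
    by_cases hxp : x = (r, c)
    · rw [hxp, Function.update_self, hqv]
    · rw [Function.update_of_ne hxp, Function.update_of_ne hxp]

theorem SYT_rec (lam : Ptn) (h0 : lam.size ≠ 0) :
    fSYT lam = ∑ μ ∈ downNbrs lam, fSYT μ := by
  have hset : {σ : ℕ × ℕ → ℕ | IsSYT lam σ}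
      = ⋃ μ ∈ downNbrs lam,
          (fun σ => Function.update σ (addCell lam μ) lam.size) ''
            {σ : ℕ × ℕ → ℕ | IsSYT μ σ} := by
    ext σ
    simp only [Set.mem_setOf_eq, Set.mem_iUnion, Set.mem_image, exists_prop]
    constructor
    · intro hσ
      obtain ⟨μ, hμ, τ, hτ, he⟩ := restrict_SYT hσ h0
      exact ⟨μ, hμ, τ, hτ, he.symm⟩
    · rintro ⟨μ, hμ, τ, hτ, rfl⟩
      obtain ⟨i, hi, hk⟩ := mem_downNbrs_iff_row.1 hμ
      have : addCell lam μ = (i+1, lam.parts i) := by rw [addCell, rowDiff_eq hi hk]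
      rw [this]
      exact extend_SYT hi hk hτ
  rw [fSYT, hset, ncard_biUnion]
  · refine Finset.sum_congr rfl fun μ hμ => ?_
    rw [fSYT]
    refine Set.ncard_image_of_injOn ?_
    intro σ hσ τ hτ heq
    obtain ⟨-, hpnot⟩ := addCell_spec hμ
    funext x
    by_cases hxp : x = addCell lam μ
    · rw [hxp, hσ.1 _ hpnot, hτ.1 _ hpnot]
    · have h2 : Function.update σ (addCell lam μ) lam.size x
          = Function.update τ (addCell lam μ) lam.size x := congrFun heq x
      rwa [Function.update_of_ne hxp, Function.update_of_ne hxp] at h2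
  · exact fun μ _ => (SYT_finite μ).image _
  · intro μ hμ ν hν hμν
    rw [Set.disjoint_left]
    rintro x ⟨σ, hσ, rfl⟩ ⟨τ, hτ, heq⟩
    have hszμ : μ.size + 1 = lam.size := (mem_downNbrs.1 hμ).2
    have hszν : ν.size + 1 = lam.size := (mem_downNbrs.1 hν).2
    have hpp : addCell lam ν = addCell lam μ := by
      by_contra hne
      have h3 : Function.update τ (addCell lam ν) lam.size (addCell lam ν)
          = Function.update σ (addCell lam μ) lam.size (addCell lam ν) :=
        congrFun heq (addCell lam ν)
      rw [Function.update_self, Function.update_of_ne hne] at h3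
      have hσ' : IsSYT μ σ := hσ
      have h2 := hσ'.le_size (addCell lam ν)
      omega
    exact hμν (downNbrs_inj hμ hν hpp.symm)

/-- Add a box in row `i`. -/
def incP (lam : Ptn) (i : ℕ) (h : i = 0 ∨ lam.parts i < lam.parts (i-1)) : Ptn where
  parts j := if j = i then lam.parts i + 1 else lam.parts j
  antitone := by
    intro m n hmn
    have ham := lam.antitone m n hmn
    show (if n = i then lam.parts i + 1 else lam.parts n)
      ≤ (if m = i then lam.parts i + 1 else lam.parts m)
    by_cases hm : m = i <;> by_cases hn : n = i
    · rw [if_pos hm, if_pos hn]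
    · rw [if_neg hn, if_pos hm]
      have := lam.antitone i n (by omega)
      omega
    · rw [if_pos hn, if_neg hm]
      have h2 : i ≠ 0 := by omega
      have := lam.antitone m (i-1) (by omega)
      omega
    · rw [if_neg hn, if_neg hm]
      exact ham
  finite := by
    obtain ⟨N, hN⟩ := lam.finite
    refine ⟨max N (i+1), fun n hn => ?_⟩
    have hni : n ≠ i := by omega
    simp only [hni, if_neg]
    exact hN n (by omega)

theorem incP_parts {lam : Ptn} {i : ℕ} (h : i = 0 ∨ lam.parts i < lam.parts (i-1)) :
    (incP lam i h).parts i = lam.parts i + 1 ∧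
      ∀ k : ℕ, k ≠ i → lam.parts k = (incP lam i h).parts k := by
  constructor
  · simp [incP]
  · intro k hk; simp [incP, hk]

theorem incP_mem_upNbrs {lam : Ptn} {i : ℕ} (h : i = 0 ∨ lam.parts i < lam.parts (i-1)) :
    incP lam i h ∈ upNbrs lam :=
  mem_upNbrs_iff_row.2 ⟨i, (incP_parts h).1, (incP_parts h).2⟩

theorem mem_downNbrs_incP0 (lam : Ptn) :
    lam ∈ downNbrs (incP lam 0 (Or.inl rfl)) := by
  refine mem_downNbrs_iff_row.2 ⟨0, (incP_parts (Or.inl rfl)).1, ?_⟩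
  intro k hk
  exact ((incP_parts (Or.inl rfl)).2 k hk).symm

/-- pointwise min. -/
def pmin (l m : Ptn) : Ptn where
  parts j := min (l.parts j) (m.parts j)
  antitone := fun a b hab => min_le_min (l.antitone a b hab) (m.antitone a b hab)
  finite := by
    obtain ⟨N, hN⟩ := l.finite
    obtain ⟨M, hM⟩ := m.finite
    exact ⟨max N M, fun n hn => by
      show min (l.parts n) (m.parts n) = 0
      rw [hN n (by omega), hM n (by omega)]
      simp⟩

/-- pointwise max. -/
def pmax (l m : Ptn) : Ptn where
  parts j := max (l.parts j) (m.parts j)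
  antitone := fun a b hab => max_le_max (l.antitone a b hab) (m.antitone a b hab)
  finite := by
    obtain ⟨N, hN⟩ := l.finite
    obtain ⟨M, hM⟩ := m.finite
    exact ⟨max N M, fun n hn => by
      show max (l.parts n) (m.parts n) = 0
      rw [hN n (by omega), hM n (by omega)]
      simp⟩

open Classical in
noncomputable def remRows (lam : Ptn) : Finset ℕ :=
  (Finset.range (lam.size + 1)).filter (fun i => lam.parts (i+1) < lam.parts i)

open Classical in
noncomputable def addRows (lam : Ptn) : Finset ℕ :=
  (Finset.range (lam.size + 1)).filter (fun i => i = 0 ∨ lam.parts i < lam.parts (i-1))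

theorem lt_size_of_parts_pos {lam : Ptn} {i : ℕ} (h : 1 ≤ lam.parts i) : i < lam.size := by
  by_contra hc
  have := Ptn.parts_eq_zero_of_size_le (l := lam) (i := i) (by omega)
  omega

theorem card_downNbrs_eq (lam : Ptn) : (downNbrs lam).card = (remRows lam).card := by
  classical
  refine Finset.card_bij (fun μ _ => rowDiff lam μ) ?_ ?_ ?_
  · intro μ hμ
    show rowDiff lam μ ∈ remRows lam
    obtain ⟨i, hi, hk⟩ := mem_downNbrs_iff_row.1 hμ
    rw [rowDiff_eq hi hk]
    simp only [remRows, Finset.mem_filter, Finset.mem_range]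
    have h1 := μ.antitone i (i+1) (by omega)
    have h2 := hk (i+1) (by omega)
    have h3 : i < lam.size := lt_size_of_parts_pos (by omega)
    exact ⟨by omega, by omega⟩
  · intro μ hμ ν hν h
    have h' : rowDiff lam μ = rowDiff lam ν := h
    refine downNbrs_inj hμ hν ?_
    rw [addCell, addCell, h']
  · intro i hi
    simp only [remRows, Finset.mem_filter, Finset.mem_range] at hi
    have hμi := (mem_downNbrs_iff_row (lam := lam) (μ := decP lam i hi.2))
    have hi' : lam.parts i = (decP lam i hi.2).parts i + 1 := by
      show lam.parts i = (if i = i then lam.parts i - 1 else lam.parts i) + 1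
      rw [if_pos rfl]
      omega
    have hk' : ∀ k : ℕ, k ≠ i → lam.parts k = (decP lam i hi.2).parts k := by
      intro k hk
      show lam.parts k = (if k = i then lam.parts i - 1 else lam.parts k)
      rw [if_neg hk]
    exact ⟨decP lam i hi.2, hμi.2 ⟨i, hi', hk'⟩, rowDiff_eq hi' hk'⟩

theorem card_upNbrs_eq (lam : Ptn) : (upNbrs lam).card = (addRows lam).card := by
  classical
  refine Finset.card_bij (fun μ _ => rowDiff μ lam) ?_ ?_ ?_
  · intro μ hμ
    show rowDiff μ lam ∈ addRows lam
    obtain ⟨i, hi, hk⟩ := mem_upNbrs_iff_row.1 hμ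
    rw [rowDiff_eq hi (fun k h => (hk k h).symm)]
    simp only [addRows, Finset.mem_filter, Finset.mem_range]
    by_cases h0 : i = 0
    · exact ⟨by omega, Or.inl h0⟩
    · have h1 := lam.antitone (i-1) i (by omega)
      have h2 := μ.antitone (i-1) i (by omega)
      have h3 := hk (i-1) (by omega)
      have h4 : i - 1 < lam.size := lt_size_of_parts_pos (by omega)
      exact ⟨by omega, Or.inr (by omega)⟩
  · intro μ hμ ν hν h
    have h2 : rowDiff μ lam = rowDiff ν lam := h
    obtain ⟨i, hi, hk⟩ := mem_upNbrs_iff_row.1 hμ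
    obtain ⟨j, hj, hl⟩ := mem_upNbrs_iff_row.1 hν
    rw [rowDiff_eq hi (fun k h' => (hk k h').symm),
      rowDiff_eq hj (fun k h' => (hl k h').symm)] at h2
    subst h2
    refine Ptn.ext' (funext fun k => ?_)
    by_cases hki : k = i
    · subst hki; omega
    · rw [← hk k hki, ← hl k hki]
  · intro i hi
    simp only [addRows, Finset.mem_filter, Finset.mem_range] at hi
    refine ⟨incP lam i hi.2, incP_mem_upNbrs hi.2,
      rowDiff_eq (incP_parts hi.2).1 (fun k h => ((incP_parts hi.2).2 k h).symm)⟩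

theorem card_addRows (lam : Ptn) : (addRows lam).card = (remRows lam).card + 1 := by
  classical
  have h : addRows lam = insert 0 ((remRows lam).image (· + 1)) := by
    ext j
    simp only [addRows, remRows, Finset.mem_insert, Finset.mem_image, Finset.mem_filter,
      Finset.mem_range]
    constructor
    · rintro ⟨hj, h0 | hlt⟩
      · exact Or.inl h0
      · by_cases hj0 : j = 0
        · exact Or.inl hj0
        · refine Or.inr ⟨j - 1, ⟨?_, ?_⟩, by omega⟩
          · omega
          · have : j - 1 + 1 = j := by omega
            rw [this]
            exact hlt
    · rintro (rfl | ⟨i, ⟨hi1, hi2⟩, rfl⟩)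
      · exact ⟨by omega, Or.inl rfl⟩
      · have h3 : i < lam.size := lt_size_of_parts_pos (by omega)
        refine ⟨by omega, Or.inr ?_⟩
        simpa using hi2
  rw [h, Finset.card_insert_of_notMem (by simp), Finset.card_image_of_injective _
    (fun a b hab => by omega)]

theorem up_inter_subsingleton {l ν : Ptn} (hne : l ≠ ν) {μ μ' : Ptn}
    (h1 : μ ∈ upNbrs l) (h2 : μ ∈ upNbrs ν) (h3 : μ' ∈ upNbrs l) (h4 : μ' ∈ upNbrs ν) :
    μ = μ' := by
  obtain ⟨a, ha, hka⟩ := mem_upNbrs_iff_row.1 h1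
  obtain ⟨b, hb, hkb⟩ := mem_upNbrs_iff_row.1 h2
  obtain ⟨a', ha', hka'⟩ := mem_upNbrs_iff_row.1 h3
  obtain ⟨b', hb', hkb'⟩ := mem_upNbrs_iff_row.1 h4
  have hab : a ≠ b := by
    rintro rfl
    refine hne (Ptn.ext' (funext fun k => ?_))
    by_cases hk : k = a
    · subst hk; omega
    · rw [hka k hk, ← hkb k hk]
  have hab' : a' ≠ b' := by
    rintro rfl
    refine hne (Ptn.ext' (funext fun k => ?_))
    by_cases hk : k = a'
    · subst hk; omega
    · rw [hka' k hk, ← hkb' k hk]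
  have hνa : ν.parts a = l.parts a + 1 := by
    have := hkb a hab
    omega
  have hlb : l.parts b = ν.parts b + 1 := by
    have := hka b (Ne.symm hab)
    omega
  have haa : a' = a := by
    by_contra hc
    have e1 : ν.parts a' = l.parts a' + 1 := by
      have := hkb' a' hab'
      omega
    by_cases hcb : a' = b
    · subst hcb; omega
    · have e2 := hka a' hc
      have e3 := hkb a' hcb
      omega
  subst haa
  refine Ptn.ext' (funext fun k => ?_)
  by_cases hk : k = a'
  · subst hk; omega
  · rw [← hka k hk, ← hka' k hk]

theorem down_inter_subsingleton {l ν : Ptn} (hne : l ≠ ν) {κ κ' : Ptn}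
    (h1 : κ ∈ downNbrs l) (h2 : κ ∈ downNbrs ν) (h3 : κ' ∈ downNbrs l)
    (h4 : κ' ∈ downNbrs ν) : κ = κ' := by
  obtain ⟨b, hb, hkb⟩ := mem_downNbrs_iff_row.1 h1
  obtain ⟨a, ha, hka⟩ := mem_downNbrs_iff_row.1 h2
  obtain ⟨b', hb', hkb'⟩ := mem_downNbrs_iff_row.1 h3
  obtain ⟨a', ha', hka'⟩ := mem_downNbrs_iff_row.1 h4
  have hab : a ≠ b := by
    rintro rfl
    refine hne (Ptn.ext' (funext fun k => ?_))
    by_cases hk : k = a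
    · subst hk; omega
    · rw [hkb k hk, ← hka k hk]
  have hab' : a' ≠ b' := by
    rintro rfl
    refine hne (Ptn.ext' (funext fun k => ?_))
    by_cases hk : k = a'
    · subst hk; omega
    · rw [hkb' k hk, ← hka' k hk]
  have hlb : l.parts b = ν.parts b + 1 := by
    have := hka b (Ne.symm hab)
    omega
  have hla : ν.parts a = l.parts a + 1 := by
    have := hkb a hab
    omega
  have hbb : b' = b := by
    by_contra hc
    have e1 : l.parts b' = ν.parts b' + 1 := by
      have := hka' b' (Ne.symm hab')
      omega
    by_cases hcb : b' = a
    · subst hcb; omega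
    · have e2 := hkb b' hc
      have e3 := hka b' hcb
      omega
  subst hbb
  refine Ptn.ext' (funext fun k => ?_)
  by_cases hk : k = b'
  · subst hk; omega
  · rw [← hkb k hk, ← hkb' k hk]

theorem exists_down_of_up {l ν μ : Ptn} (hne : l ≠ ν)
    (h1 : μ ∈ upNbrs l) (h2 : μ ∈ upNbrs ν) :
    pmin l ν ∈ downNbrs l ∧ pmin l ν ∈ downNbrs ν := by
  obtain ⟨a, ha, hka⟩ := mem_upNbrs_iff_row.1 h1
  obtain ⟨b, hb, hkb⟩ := mem_upNbrs_iff_row.1 h2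
  have hab : a ≠ b := by
    rintro rfl
    refine hne (Ptn.ext' (funext fun k => ?_))
    by_cases hk : k = a
    · subst hk; omega
    · rw [hka k hk, ← hkb k hk]
  have hνa : ν.parts a = l.parts a + 1 := by
    have := hkb a hab
    omega
  have hlb : l.parts b = ν.parts b + 1 := by
    have := hka b (Ne.symm hab)
    omega
  have hmin : ∀ k, (pmin l ν).parts k = min (l.parts k) (ν.parts k) := fun k => rfl
  constructor
  · refine mem_downNbrs_iff_row.2 ⟨b, ?_, ?_⟩
    · rw [hmin]; omega
    · intro k hk
      rw [hmin]
      by_cases hka' : k = a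
      · subst hka'; omega
      · have e1 := hka k hka'
        have e2 := hkb k hk
        omega
  · refine mem_downNbrs_iff_row.2 ⟨a, ?_, ?_⟩
    · rw [hmin]; omega
    · intro k hk
      rw [hmin]
      by_cases hkb' : k = b
      · subst hkb'; omega
      · have e1 := hka k hk
        have e2 := hkb k hkb'
        omega

theorem exists_up_of_down {l ν κ : Ptn} (hne : l ≠ ν)
    (h1 : κ ∈ downNbrs l) (h2 : κ ∈ downNbrs ν) :
    pmax l ν ∈ upNbrs l ∧ pmax l ν ∈ upNbrs ν := by
  obtain ⟨b, hb, hkb⟩ := mem_downNbrs_iff_row.1 h1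
  obtain ⟨a, ha, hka⟩ := mem_downNbrs_iff_row.1 h2
  have hab : a ≠ b := by
    rintro rfl
    refine hne (Ptn.ext' (funext fun k => ?_))
    by_cases hk : k = a
    · subst hk; omega
    · rw [hkb k hk, ← hka k hk]
  have hlb : l.parts b = ν.parts b + 1 := by
    have := hka b (Ne.symm hab)
    omega
  have hla : ν.parts a = l.parts a + 1 := by
    have := hkb a hab
    omega
  have hmax : ∀ k, (pmax l ν).parts k = max (l.parts k) (ν.parts k) := fun k => rfl
  constructor
  · refine mem_upNbrs_iff_row.2 ⟨a, ?_, ?_⟩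
    · rw [hmax]; omega
    · intro k hk
      rw [hmax]
      by_cases hkb' : k = b
      · subst hkb'; omega
      · have e1 := hkb k hkb'
        have e2 := hka k hk
        omega
  · refine mem_upNbrs_iff_row.2 ⟨b, ?_, ?_⟩
    · rw [hmax]; omega
    · intro k hk
      rw [hmax]
      by_cases hka' : k = a
      · subst hka'; omega
      · have e1 := hkb k hk
        have e2 := hka k hka'
        omega

open Classical in
theorem card_inter_eq {l ν : Ptn} (hne : l ≠ ν) :
    (upNbrs l ∩ upNbrs ν).card = (downNbrs l ∩ downNbrs ν).card := by
  classical
  have hU : (upNbrs l ∩ upNbrs ν).card ≤ 1 := Finset.card_le_one.2 (fun μ h μ' h' => by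
    rw [Finset.mem_inter] at h h'
    exact up_inter_subsingleton hne h.1 h.2 h'.1 h'.2)
  have hD : (downNbrs l ∩ downNbrs ν).card ≤ 1 := Finset.card_le_one.2 (fun κ h κ' h' => by
    rw [Finset.mem_inter] at h h'
    exact down_inter_subsingleton hne h.1 h.2 h'.1 h'.2)
  rcases Finset.eq_empty_or_nonempty (upNbrs l ∩ upNbrs ν) with hU0 | ⟨μ, hμ⟩
  · rcases Finset.eq_empty_or_nonempty (downNbrs l ∩ downNbrs ν) with hD0 | ⟨κ, hκ⟩
    · rw [hU0, hD0]
    · exfalso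
      rw [Finset.mem_inter] at hκ
      obtain ⟨hm1, hm2⟩ := exists_up_of_down hne hκ.1 hκ.2
      have : pmax l ν ∈ upNbrs l ∩ upNbrs ν := Finset.mem_inter.2 ⟨hm1, hm2⟩
      rw [hU0] at this
      exact absurd this (Finset.notMem_empty _)
  · rw [Finset.mem_inter] at hμ
    obtain ⟨hm1, hm2⟩ := exists_down_of_up hne hμ.1 hμ.2
    have h1 : 0 < (upNbrs l ∩ upNbrs ν).card :=
      Finset.card_pos.2 ⟨μ, Finset.mem_inter.2 hμ⟩
    have h2 : 0 < (downNbrs l ∩ downNbrs ν).card :=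
      Finset.card_pos.2 ⟨pmin l ν, Finset.mem_inter.2 ⟨hm1, hm2⟩⟩
    omega

theorem sum_f_up_aux : ∀ n : ℕ, ∀ lam : Ptn, lam.size = n →
    ∑ μ ∈ upNbrs lam, fSYT μ = (lam.size + 1) * fSYT lam := by
  intro n
  induction n using Nat.strong_induction_on with
  | _ n IH =>
  intro lam hn
  classical
  set B := (upNbrs lam).biUnion (fun μ => downNbrs μ) with hB
  have hszup : ∀ μ ∈ upNbrs lam, μ.size = lam.size + 1 :=
    fun μ h => ((mem_upNbrs.1 h).2).symm
  have hlamB : lam ∈ B := Finset.mem_biUnion.2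
    ⟨incP lam 0 (Or.inl rfl), incP_mem_upNbrs _, mem_downNbrs_incP0 lam⟩
  have step1 : ∑ μ ∈ upNbrs lam, fSYT μ = ∑ μ ∈ upNbrs lam, ∑ ν ∈ downNbrs μ, fSYT ν :=
    Finset.sum_congr rfl fun μ hμ => SYT_rec μ (by have := hszup μ hμ; omega)
  have hsub : ∀ μ ∈ upNbrs lam, downNbrs μ = B.filter (fun ν => ν ∈ downNbrs μ) := by
    intro μ hμ
    ext ν
    simp only [Finset.mem_filter, hB, Finset.mem_biUnion]
    exact ⟨fun h => ⟨⟨μ, hμ, h⟩, h⟩, fun ⟨_, h⟩ => h⟩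
  have step2 : ∑ μ ∈ upNbrs lam, ∑ ν ∈ downNbrs μ, fSYT ν
      = ∑ ν ∈ B, (upNbrs lam ∩ upNbrs ν).card * fSYT ν := by
    calc ∑ μ ∈ upNbrs lam, ∑ ν ∈ downNbrs μ, fSYT ν
        = ∑ μ ∈ upNbrs lam, ∑ ν ∈ B, if ν ∈ downNbrs μ then fSYT ν else 0 := by
          refine Finset.sum_congr rfl fun μ hμ => ?_
          conv_lhs => rw [hsub μ hμ]
          rw [Finset.sum_filter]
      _ = ∑ ν ∈ B, ∑ μ ∈ upNbrs lam, if ν ∈ downNbrs μ then fSYT ν else 0 :=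
          Finset.sum_comm
      _ = ∑ ν ∈ B, (upNbrs lam ∩ upNbrs ν).card * fSYT ν := by
          refine Finset.sum_congr rfl fun ν hν => ?_
          rw [Finset.sum_ite, Finset.sum_const, Finset.sum_const_zero, add_zero,
            smul_eq_mul]
          have hfe : Finset.filter (fun μ => ν ∈ downNbrs μ) (upNbrs lam)
              = upNbrs lam ∩ upNbrs ν := by
            ext μ
            simp only [Finset.mem_filter, Finset.mem_inter]
            constructor
            · rintro ⟨h1, h2⟩
              exact ⟨h1, upNbrs_downNbrs_symm.2 h2⟩
            · rintro ⟨h1, h2⟩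
              exact ⟨h1, upNbrs_downNbrs_symm.1 h2⟩
          rw [hfe]
  have key : ∀ ν ∈ B, (upNbrs lam ∩ upNbrs ν).card
      = (downNbrs lam ∩ downNbrs ν).card + (if ν = lam then 1 else 0) := by
    intro ν hν
    by_cases hc : ν = lam
    · subst hc
      rw [if_pos rfl, Finset.inter_self, Finset.inter_self, card_upNbrs_eq,
        card_addRows, card_downNbrs_eq]
    · rw [if_neg hc, card_inter_eq (fun h => hc h.symm), add_zero]
  have step3 : ∑ ν ∈ B, (upNbrs lam ∩ upNbrs ν).card * fSYT ν
      = (∑ ν ∈ B, (downNbrs lam ∩ downNbrs ν).card * fSYT ν) + fSYT lam := by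
    calc ∑ ν ∈ B, (upNbrs lam ∩ upNbrs ν).card * fSYT ν
        = ∑ ν ∈ B, ((downNbrs lam ∩ downNbrs ν).card * fSYT ν
            + (if ν = lam then fSYT ν else 0)) := by
          refine Finset.sum_congr rfl fun ν hν => ?_
          rw [key ν hν, add_mul, ite_mul, one_mul, zero_mul]
      _ = (∑ ν ∈ B, (downNbrs lam ∩ downNbrs ν).card * fSYT ν)
            + ∑ ν ∈ B, (if ν = lam then fSYT ν else 0) := Finset.sum_add_distrib
      _ = _ := by
          rw [Finset.sum_ite_eq' B lam fSYT, if_pos hlamB]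
  have hsub2 : ∀ κ ∈ downNbrs lam, upNbrs κ = B.filter (fun ν => κ ∈ downNbrs ν) := by
    intro κ hκ
    ext ν
    simp only [Finset.mem_filter, hB, Finset.mem_biUnion]
    constructor
    · intro h
      have hκν : κ ∈ downNbrs ν := upNbrs_downNbrs_symm.1 h
      refine ⟨?_, hκν⟩
      by_cases hc : ν = lam
      · subst hc
        exact ⟨incP ν 0 (Or.inl rfl), incP_mem_upNbrs _, mem_downNbrs_incP0 ν⟩
      · obtain ⟨hm1, hm2⟩ := exists_up_of_down (show lam ≠ ν from fun h' => hc h'.symm)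
          hκ hκν
        exact ⟨pmax lam ν, hm1, upNbrs_downNbrs_symm.1 hm2⟩
    · rintro ⟨-, h⟩
      exact upNbrs_downNbrs_symm.2 h
  have step4 : ∑ ν ∈ B, (downNbrs lam ∩ downNbrs ν).card * fSYT ν
      = ∑ κ ∈ downNbrs lam, ∑ ν ∈ upNbrs κ, fSYT ν := by
    calc ∑ ν ∈ B, (downNbrs lam ∩ downNbrs ν).card * fSYT ν
        = ∑ ν ∈ B, ∑ κ ∈ downNbrs lam, if κ ∈ downNbrs ν then fSYT ν else 0 := by
          refine Finset.sum_congr rfl fun ν hν => ?_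
          rw [Finset.sum_ite, Finset.sum_const, Finset.sum_const_zero, add_zero,
            smul_eq_mul]
          have hfe : Finset.filter (fun κ => κ ∈ downNbrs ν) (downNbrs lam)
              = downNbrs lam ∩ downNbrs ν := by
            ext κ
            simp only [Finset.mem_filter, Finset.mem_inter]
          rw [hfe]
      _ = ∑ κ ∈ downNbrs lam, ∑ ν ∈ B, if κ ∈ downNbrs ν then fSYT ν else 0 :=
          Finset.sum_comm
      _ = ∑ κ ∈ downNbrs lam, ∑ ν ∈ upNbrs κ, fSYT ν := by
          refine Finset.sum_congr rfl fun κ hκ => ?_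
          conv_rhs => rw [hsub2 κ hκ]
          rw [Finset.sum_filter]
  have step5 : ∑ κ ∈ downNbrs lam, ∑ ν ∈ upNbrs κ, fSYT ν = lam.size * fSYT lam := by
    have h1 : ∀ κ ∈ downNbrs lam, ∑ ν ∈ upNbrs κ, fSYT ν = lam.size * fSYT κ := by
      intro κ hκ
      have hsz := (mem_downNbrs.1 hκ).2
      rw [IH κ.size (by omega) κ rfl, hsz]
    rw [Finset.sum_congr rfl h1, ← Finset.mul_sum]
    by_cases h0 : lam.size = 0
    · have hemp : downNbrs lam = ∅ := Finset.eq_empty_of_forall_notMem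
        (fun κ hκ => by have := (mem_downNbrs.1 hκ).2; omega)
      rw [h0, hemp]
      simp
    · rw [← SYT_rec lam h0]
  rw [step1, step2, step3, step4, step5]
  ring

theorem sum_f_up (lam : Ptn) :
    ∑ μ ∈ upNbrs lam, fSYT μ = (lam.size + 1) * fSYT lam :=
  sum_f_up_aux lam.size lam rfl

theorem df_step : ∀ {k : ℕ}, 1 ≤ k →
    Nat.doubleFactorial k = k * Nat.doubleFactorial (k - 2)
  | 0, h => absurd h (by omega)
  | 1, _ => by simp [Nat.doubleFactorial]
  | (j+2), _ => by
      have h2 : j + 2 - 2 = j := rfl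
      rw [h2, Nat.doubleFactorial]

theorem master_arith (l n : ℕ) (h1 : n ≤ l + 1) (h2 : (l + 1 - n) % 2 = 0) (f : ℕ) :
    Nat.choose (l+1) n * Nat.doubleFactorial (l+1-n-1) * f
      = Nat.choose l (n-1) * Nat.doubleFactorial (l-n) * (if n = 0 then 0 else f)
        + (if n = l+1 then 0
           else Nat.choose l (n+1) * Nat.doubleFactorial (l-n-2) * ((n+1) * f)) := by
  by_cases hn : n = l + 1
  · subst hn
    rw [if_pos rfl, if_neg (by omega : ¬ l + 1 = 0)]
    have e1 : l + 1 - (l + 1) - 1 = 0 := by omega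
    have e2 : l + 1 - 1 = l := by omega
    have e3 : l - (l + 1) = 0 := by omega
    rw [e1, e2, e3, Nat.choose_self, Nat.choose_self]
    simp [Nat.doubleFactorial]
  · rw [if_neg hn]
    by_cases h0 : n = 0
    · subst h0
      have hl1 : 1 ≤ l := by omega
      rw [if_pos rfl]
      simp only [Nat.choose_zero_right, one_mul, Nat.choose_one_right, mul_zero, zero_add]
      have e4 : l + 1 - 0 - 1 = l := by omega
      have e5 : l - 0 - 2 = l - 2 := by omega
      rw [e4, e5, df_step hl1]
    · obtain ⟨k, rfl⟩ : ∃ k, n = k + 1 := ⟨n - 1, by omega⟩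
      have hnl : k + 2 ≤ l := by omega
      have e4 : l + 1 - (k+1) - 1 = l - k - 1 := by omega
      have e5 : k + 1 - 1 = k := by omega
      have e6 : l - (k+1) = l - k - 1 := by omega
      rw [e4, e5, e6]
      have e7 : l - k - 1 - 2 = l - k - 3 := by omega
      rw [e7, Nat.choose_succ_succ, add_mul, add_mul]
      congr 1
      have hch := Nat.choose_succ_right_eq l (k+1)
      rw [e6] at hch
      have hdf : Nat.doubleFactorial (l - k - 1)
          = (l - k - 1) * Nat.doubleFactorial (l - k - 3) := by
        have e8 : l - k - 1 - 2 = l - k - 3 := by omega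
        rw [df_step (show 1 ≤ l - k - 1 by omega), e8]
      rw [hdf]
      calc Nat.choose l (k+1) * ((l - k - 1) * Nat.doubleFactorial (l - k - 3)) * f
          = (Nat.choose l (k+1) * (l - k - 1)) * (Nat.doubleFactorial (l - k - 3) * f) := by
            ring
        _ = (Nat.choose l (k+1+1) * (k+1+1)) * (Nat.doubleFactorial (l - k - 3) * f) := by
            rw [hch]
        _ = _ := by ring

theorem OT_count : ∀ l : ℕ, ∀ lam : Ptn,
    {e : List Ptn | IsOT lam l e}.ncard
      = if lam.size ≤ l ∧ Even (l - lam.size) then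
          Nat.choose l lam.size * Nat.doubleFactorial (l - lam.size - 1) * fSYT lam
        else 0 := by
  intro l
  induction l with
  | zero =>
    intro lam
    by_cases hlam : lam = emptyPtn
    · subst hlam
      have hset : {e : List Ptn | IsOT emptyPtn 0 e} = {[emptyPtn]} := by
        ext e
        simp only [Set.mem_setOf_eq, Set.mem_singleton_iff, isOT_zero_iff]
        tauto
      rw [hset, Set.ncard_singleton, if_pos ⟨by simp [Ptn.size_emptyPtn], by
        simp [Ptn.size_emptyPtn]⟩]
      simp [Ptn.size_emptyPtn, fSYT_empty, Nat.doubleFactorial]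
    · have hset : {e : List Ptn | IsOT lam 0 e} = ∅ := by
        ext e
        simp only [Set.mem_setOf_eq, Set.mem_empty_iff_false, iff_false, isOT_zero_iff]
        rintro ⟨h, -⟩
        exact hlam h
      rw [hset, Set.ncard_empty, if_neg]
      rintro ⟨h1, -⟩
      exact hlam (Ptn.eq_empty_of_size_eq_zero (by omega))
  | succ l IH =>
    intro lam
    set n := lam.size with hndef
    by_cases hcond : n ≤ l + 1 ∧ Even (l + 1 - n)
    · rw [if_pos hcond]
      have h2' : (l + 1 - n) % 2 = 0 := Nat.even_iff.1 hcond.2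
      rw [OT_rec, sum_nbrs_split]
      have hdown : ∑ μ ∈ downNbrs lam, {e : List Ptn | IsOT μ l e}.ncard
          = Nat.choose l (n-1) * Nat.doubleFactorial (l-n) * (if n = 0 then 0 else fSYT lam) := by
        have hterm : ∀ μ ∈ downNbrs lam, {e : List Ptn | IsOT μ l e}.ncard
            = Nat.choose l (n-1) * Nat.doubleFactorial (l-n) * fSYT μ := by
          intro μ hμ
          have hμs : μ.size + 1 = n := (mem_downNbrs.1 hμ).2
          rw [IH μ, if_pos ⟨by omega, by rw [Nat.even_iff]; omega⟩]
          have e1 : μ.size = n - 1 := by omega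
          rw [e1]
          have e2 : l - (n - 1) - 1 = l - n := by omega
          rw [e2]
        rw [Finset.sum_congr rfl hterm, ← Finset.mul_sum]
        by_cases h0 : n = 0
        · have hemp : downNbrs lam = ∅ := Finset.eq_empty_of_forall_notMem
            (fun κ hκ => by have := (mem_downNbrs.1 hκ).2; omega)
          rw [hemp, if_pos h0]
          simp
        · rw [if_neg h0, ← SYT_rec lam h0]
      have hup : ∑ μ ∈ upNbrs lam, {e : List Ptn | IsOT μ l e}.ncard
          = if n = l + 1 then 0
            else Nat.choose l (n+1) * Nat.doubleFactorial (l-n-2) * ((n+1) * fSYT lam) := by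
        by_cases hn : n = l + 1
        · rw [if_pos hn]
          refine Finset.sum_eq_zero fun μ hμ => ?_
          have hμs : n + 1 = μ.size := (mem_upNbrs.1 hμ).2
          rw [IH μ, if_neg]
          rintro ⟨h, -⟩
          omega
        · rw [if_neg hn]
          have hterm : ∀ μ ∈ upNbrs lam, {e : List Ptn | IsOT μ l e}.ncard
              = Nat.choose l (n+1) * Nat.doubleFactorial (l-n-2) * fSYT μ := by
            intro μ hμ
            have hμs : n + 1 = μ.size := (mem_upNbrs.1 hμ).2
            rw [IH μ, if_pos ⟨by omega, by rw [Nat.even_iff]; omega⟩]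
            have e1 : μ.size = n + 1 := by omega
            rw [e1]
            have e2 : l - (n + 1) - 1 = l - n - 2 := by omega
            rw [e2]
          rw [Finset.sum_congr rfl hterm, ← Finset.mul_sum, sum_f_up, ← hndef]
      rw [hdown, hup]
      exact (master_arith l n hcond.1 h2' (fSYT lam)).symm
    · rw [if_neg hcond]
      have hset : {e : List Ptn | IsOT lam (l+1) e} = ∅ :=
        Set.eq_empty_iff_forall_notMem.2 fun e he => hcond he.size_le
      rw [hset, Set.ncard_empty]

/-- `|OT(λ,l)| = C(l,|λ|) · (l-|λ|-1)!! · f^λ` when `(l-|λ|)/2` is a nonnegative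
integer. -/
theorem statement18 (lam : Ptn) (l : ℕ) (h1 : lam.size ≤ l) (h2 : Even (l - lam.size)) :
    {e : List Ptn | IsOT lam l e}.ncard
      = Nat.choose l lam.size * Nat.doubleFactorial (l - lam.size - 1)
          * {σ : ℕ × ℕ → ℕ | IsSYT lam σ}.ncard := by
  rw [OT_count l lam, if_pos ⟨h1, h2⟩]
  rfl
end

section
/- For any positive integer n and partition λ, the number of semistandard Young tableaux of shape λ with entries in [1,n] equals ∑_{σ ∈ SYT(λ)} C(n + 𝒜(σ), |λ|), where 𝒜(σ) is the number of indices k ∈ [1, |λ|−1] such that k+1 appears in σ in the same or a higher row than k. -/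
/-- `τ` is a semistandard Young tableau of shape `lam` with entries in `[1,n]`. -/
def IsSSYT (n : ℕ) (lam : Ptn) (τ : ℕ × ℕ → ℕ) : Prop :=
  (∀ p : ℕ × ℕ, p ∉ lam.ycells → τ p = 0) ∧
  (∀ p ∈ lam.ycells, 1 ≤ τ p ∧ τ p ≤ n) ∧
  (∀ p ∈ lam.ycells, ∀ q ∈ lam.ycells, p.1 = q.1 → p.2 ≤ q.2 → τ p ≤ τ q) ∧
  (∀ p ∈ lam.ycells, ∀ q ∈ lam.ycells, p.2 = q.2 → p.1 < q.1 → τ p < τ q)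

/-- The number of ascents of a standard Young tableau `σ`: indices `k ∈ [1,|λ|-1]`
such that `k+1` appears in the same or a higher row than `k`. -/
noncomputable def ascents (lam : Ptn) (σ : ℕ × ℕ → ℕ) : ℕ :=
  {k : ℕ | 1 ≤ k ∧ k < lam.size ∧
    ∃ p ∈ lam.ycells, ∃ q ∈ lam.ycells, σ p = k ∧ σ q = k + 1 ∧ q.1 ≤ p.1}.ncard

/- ########################  Auxiliary development  ######################## -/

open scoped Classical

namespace S19

open Finset

/-! ### Finiteness of the diagram -/

lemma ycells_finite (l : Ptn) : l.ycells.Finite := by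
  obtain ⟨N, hN⟩ := l.finite
  apply Set.Finite.subset (Set.finite_Icc (1, 1) (N + 1, l.parts 0))
  intro p hp
  obtain ⟨h1, h2, h3⟩ := hp
  have hip : l.parts (p.1 - 1) ≤ l.parts 0 := l.antitone 0 (p.1 - 1) (Nat.zero_le _)
  have hiN : p.1 ≤ N + 1 := by
    by_contra h
    push_neg at h
    have h0 : l.parts (p.1 - 1) = 0 := hN _ (by omega)
    omega
  rw [Set.mem_Icc]
  exact ⟨Prod.le_def.mpr ⟨h1, h2⟩, Prod.le_def.mpr ⟨hiN, le_trans h3 hip⟩⟩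

noncomputable def cellsF (l : Ptn) : Finset (ℕ × ℕ) := (ycells_finite l).toFinset

lemma mem_cellsF {l : Ptn} {p : ℕ × ℕ} : p ∈ cellsF l ↔ p ∈ l.ycells :=
  Set.Finite.mem_toFinset _

lemma coe_cellsF (l : Ptn) : (↑(cellsF l) : Set (ℕ × ℕ)) = l.ycells :=
  Set.Finite.coe_toFinset _

lemma size_eq (l : Ptn) : l.size = (cellsF l).card := by
  rw [Ptn.size, ← Set.ncard_coe_finset, coe_cellsF]

/-- the rectangle lemma: if `p, q` are cells and `p.1 ≤ q.1` then `(p.1, q.2)` is a cell. -/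
lemma cell_rect {l : Ptn} {p q : ℕ × ℕ} (hp : p ∈ l.ycells) (hq : q ∈ l.ycells)
    (h : p.1 ≤ q.1) : (p.1, q.2) ∈ l.ycells :=
  ⟨hp.1, hq.2.1, le_trans hq.2.2 (l.antitone (p.1 - 1) (q.1 - 1) (by omega))⟩

/-! ### Ranking in a finite linear order -/

variable {α : Type*} [LinearOrder α]

noncomputable def rnk (s : Finset α) (x : α) : ℕ := (s.filter (· ≤ x)).card

lemma rnk_lt_rnk {s : Finset α} {x y : α} (hy : y ∈ s) (hxy : x < y) :
    rnk s x < rnk s y := by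
  apply Finset.card_lt_card
  constructor
  · intro z hz
    rw [Finset.mem_filter] at *
    exact ⟨hz.1, le_trans hz.2 hxy.le⟩
  · intro hsub
    have hmem : y ∈ s.filter (· ≤ x) := hsub (by simp [hy])
    rw [Finset.mem_filter] at hmem
    exact absurd hmem.2 (not_le.mpr hxy)

lemma rnk_mem {s : Finset α} {x : α} (hx : x ∈ s) : rnk s x ∈ Finset.Icc 1 s.card := by
  rw [Finset.mem_Icc]
  constructor
  · have : x ∈ s.filter (· ≤ x) := by simp [hx]
    exact Finset.card_pos.mpr ⟨x, this⟩
  · exact Finset.card_le_card (Finset.filter_subset _ _)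

lemma rnk_injOn (s : Finset α) : Set.InjOn (rnk s) ↑s := by
  intro x hx y hy hxy
  rcases lt_trichotomy x y with h | h | h
  · exact absurd hxy (Nat.ne_of_lt (rnk_lt_rnk (by exact_mod_cast hy) h))
  · exact h
  · exact absurd hxy.symm (Nat.ne_of_lt (rnk_lt_rnk (by exact_mod_cast hx) h))

lemma rnk_bijOn (s : Finset α) : Set.BijOn (rnk s) ↑s ↑(Finset.Icc 1 s.card) := by
  refine ⟨fun x hx => by exact_mod_cast rnk_mem (by exact_mod_cast hx), rnk_injOn s, ?_⟩
  have hsurj := Finset.surj_on_of_inj_on_of_card_le (s := s) (t := Finset.Icc 1 s.card)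
    (fun x _ => rnk s x) (fun x hx => rnk_mem hx)
    (fun x y hx hy h => rnk_injOn s (by exact_mod_cast hx) (by exact_mod_cast hy) h)
    (by rw [Nat.card_Icc]; omega)
  intro m hm
  obtain ⟨x, hx, hxm⟩ := hsurj m (by exact_mod_cast hm)
  exact ⟨x, by exact_mod_cast hx, hxm.symm⟩

/-! ### Standardization -/

noncomputable def key (τ : ℕ × ℕ → ℕ) (p : ℕ × ℕ) : ℕ ×ₗ ℕ := toLex (τ p, p.2)

lemma key_lt_iff {τ : ℕ × ℕ → ℕ} {p q : ℕ × ℕ} :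
    key τ p < key τ q ↔ (τ p < τ q ∨ (τ p = τ q ∧ p.2 < q.2)) := by
  rw [key, key, Prod.Lex.lt_iff]
  exact Iff.rfl

lemma key_eq_iff {τ : ℕ × ℕ → ℕ} {p q : ℕ × ℕ} :
    key τ p = key τ q ↔ (τ p = τ q ∧ p.2 = q.2) := by
  constructor
  · intro h
    exact ⟨congrArg (fun x => (ofLex x).1) h, congrArg (fun x => (ofLex x).2) h⟩
  · rintro ⟨h1, h2⟩
    simp only [key]
    rw [h1, h2]

noncomputable def keyF (l : Ptn) (τ : ℕ × ℕ → ℕ) : Finset (ℕ ×ₗ ℕ) :=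
  (cellsF l).image (key τ)

noncomputable def stdOf (l : Ptn) (τ : ℕ × ℕ → ℕ) : ℕ × ℕ → ℕ :=
  fun p => if p ∈ l.ycells then rnk (keyF l τ) (key τ p) else 0

/-- descents of a tableau -/
def Desc (l : Ptn) (σ : ℕ × ℕ → ℕ) (k : ℕ) : Prop :=
  ∃ p ∈ l.ycells, ∃ q ∈ l.ycells, σ p = k ∧ σ q = k + 1 ∧ p.1 < q.1

/-- ascents of a tableau -/
def Asc (l : Ptn) (σ : ℕ × ℕ → ℕ) (k : ℕ) : Prop :=
  ∃ p ∈ l.ycells, ∃ q ∈ l.ycells, σ p = k ∧ σ q = k + 1 ∧ q.1 ≤ p.1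

/-- condition on the content sequence -/
def Cond (n : ℕ) (l : Ptn) (σ : ℕ × ℕ → ℕ) (a : ℕ → ℕ) : Prop :=
  (∀ k : ℕ, k = 0 ∨ l.size < k → a k = 0) ∧
  (∀ k : ℕ, 1 ≤ k → k ≤ l.size → 1 ≤ a k ∧ a k ≤ n) ∧
  (∀ k : ℕ, 1 ≤ k → k + 1 ≤ l.size → a k ≤ a (k + 1) ∧ (Desc l σ k → a k < a (k + 1)))

noncomputable def Phi (l : Ptn) (σ : ℕ × ℕ → ℕ) (a : ℕ → ℕ) : ℕ × ℕ → ℕ :=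
  fun p => if p ∈ l.ycells then a (σ p) else 0

noncomputable def aOf (l : Ptn) (σ τ : ℕ × ℕ → ℕ) (k : ℕ) : ℕ :=
  if 1 ≤ k ∧ k ≤ l.size then τ (Function.invFunOn σ l.ycells k) else 0

/-! ### Basic facts about SYT -/

section SYTFacts

variable {l : Ptn} {σ : ℕ × ℕ → ℕ}

lemma syt_mem_Icc (hσ : IsSYT l σ) {p : ℕ × ℕ} (hp : p ∈ l.ycells) :
    1 ≤ σ p ∧ σ p ≤ l.size := by
  have := hσ.2.1.1 hp
  rwa [Set.mem_Icc] at this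

lemma exists_cell (hσ : IsSYT l σ) {k : ℕ} (h1 : 1 ≤ k) (h2 : k ≤ l.size) :
    ∃ p ∈ l.ycells, σ p = k := by
  have : k ∈ Set.Icc 1 l.size := Set.mem_Icc.mpr ⟨h1, h2⟩
  obtain ⟨p, hp, hpk⟩ := hσ.2.1.2.2 this
  exact ⟨p, hp, hpk⟩

/-- if there are no descents between `k` and `k'`, rows weakly decrease. -/
lemma rows_mono (hσ : IsSYT l σ) :
    ∀ k, 1 ≤ k → ∀ k', k ≤ k' → k' ≤ l.size →
    (∀ j, k ≤ j → j < k' → ¬ Desc l σ j) →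
    ∀ p ∈ l.ycells, ∀ q ∈ l.ycells, σ p = k → σ q = k' → q.1 ≤ p.1 := by
  intro k hk1 k' hkk'
  induction k', hkk' using Nat.le_induction with
  | base =>
    intro _ _ p hp q hq hpk hqk
    have : p = q := hσ.2.1.2.1 hp hq (by rw [hpk, hqk])
    rw [this]
  | succ m hm ih =>
    intro hsz hnd p hp q hq hpk hqk
    obtain ⟨r, hr, hrm⟩ := exists_cell hσ (le_trans hk1 hm) (by omega)
    have hrp : r.1 ≤ p.1 := ih (by omega) (fun j hj1 hj2 => hnd j hj1 (by omega)) p hp r hr hpk hrm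
    have hqr : q.1 ≤ r.1 := by
      by_contra hcon
      push_neg at hcon
      exact hnd m hm (by omega) ⟨r, hr, q, hq, hrm, hqk, hcon⟩
    omega

lemma asc_or_desc (hσ : IsSYT l σ) {k : ℕ} (h1 : 1 ≤ k) (h2 : k + 1 ≤ l.size) :
    (Asc l σ k ∧ ¬ Desc l σ k) ∨ (Desc l σ k ∧ ¬ Asc l σ k) := by
  obtain ⟨p, hp, hpk⟩ := exists_cell hσ h1 (by omega)
  obtain ⟨q, hq, hqk⟩ := exists_cell hσ (by omega) h2
  rcases le_or_gt q.1 p.1 with h | h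
  · left
    refine ⟨⟨p, hp, q, hq, hpk, hqk, h⟩, ?_⟩
    rintro ⟨p', hp', q', hq', hp'k, hq'k, hlt⟩
    have e1 : p' = p := hσ.2.1.2.1 hp' hp (by rw [hp'k, hpk])
    have e2 : q' = q := hσ.2.1.2.1 hq' hq (by rw [hq'k, hqk])
    rw [e1, e2] at hlt
    omega
  · right
    refine ⟨⟨p, hp, q, hq, hpk, hqk, h⟩, ?_⟩
    rintro ⟨p', hp', q', hq', hp'k, hq'k, hle⟩
    have e1 : p' = p := hσ.2.1.2.1 hp' hp (by rw [hp'k, hpk])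
    have e2 : q' = q := hσ.2.1.2.1 hq' hq (by rw [hq'k, hqk])
    rw [e1, e2] at hle
    omega

end SYTFacts

/-! ### Facts about the sequence `a` -/

section CondFacts

variable {n : ℕ} {l : Ptn} {σ : ℕ × ℕ → ℕ} {a : ℕ → ℕ}

lemma a_mono (hC : Cond n l σ a) :
    ∀ k, 1 ≤ k → ∀ k', k ≤ k' → k' ≤ l.size → a k ≤ a k' := by
  intro k hk1 k' hkk'
  induction k', hkk' using Nat.le_induction with
  | base => intro _; exact le_refl _
  | succ m hm ih =>
    intro hsz
    exact le_trans (ih (by omega)) (hC.2.2 m (by omega) (by omega)).1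

lemma a_strict (hC : Cond n l σ a) {k j k' : ℕ} (hk1 : 1 ≤ k) (hkj : k ≤ j)
    (hjk' : j + 1 ≤ k') (hk' : k' ≤ l.size) (hD : Desc l σ j) : a k < a k' :=
  calc a k ≤ a j := a_mono hC k hk1 j hkj (by omega)
    _ < a (j + 1) := (hC.2.2 j (by omega) (by omega)).2 hD
    _ ≤ a k' := a_mono hC (j + 1) (by omega) k' hjk' hk'

end CondFacts

/-! ### `Φ` produces SSYT -/

section PhiFacts

variable {n : ℕ} {l : Ptn} {σ : ℕ × ℕ → ℕ} {a : ℕ → ℕ}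

lemma phi_isSSYT (hσ : IsSYT l σ) (hC : Cond n l σ a) : IsSSYT n l (Phi l σ a) := by
  refine ⟨fun p hp => if_neg hp, ?_, ?_, ?_⟩
  · intro p hp
    simp only [Phi, if_pos hp]
    exact hC.2.1 _ (syt_mem_Icc hσ hp).1 (syt_mem_Icc hσ hp).2
  · intro p hp q hq hrow hcol
    simp only [Phi, if_pos hp, if_pos hq]
    rcases eq_or_lt_of_le hcol with h | h
    · have : p = q := Prod.ext hrow h
      rw [this]
    · have hlt : σ p < σ q := hσ.2.2.1 p hp q hq hrow h
      exact a_mono hC (σ p) (syt_mem_Icc hσ hp).1 (σ q) hlt.le (syt_mem_Icc hσ hq).2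
  · intro p hp q hq hcol hrow
    simp only [Phi, if_pos hp, if_pos hq]
    have hlt : σ p < σ q := hσ.2.2.2 p hp q hq hcol hrow
    have hdesc : ∃ j, σ p ≤ j ∧ j < σ q ∧ Desc l σ j := by
      by_contra hcon
      push_neg at hcon
      have := rows_mono hσ (σ p) (syt_mem_Icc hσ hp).1 (σ q) hlt.le (syt_mem_Icc hσ hq).2
        (fun j hj1 hj2 => hcon j hj1 hj2) p hp q hq rfl rfl
      omega
    obtain ⟨j, hj1, hj2, hD⟩ := hdesc
    exact a_strict hC (syt_mem_Icc hσ hp).1 hj1 (by omega) (syt_mem_Icc hσ hq).2 hD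

lemma key_phi_lt (hσ : IsSYT l σ) (hC : Cond n l σ a) :
    ∀ p ∈ l.ycells, ∀ q ∈ l.ycells, σ p < σ q →
      key (Phi l σ a) p < key (Phi l σ a) q := by
  intro p hp q hq hlt
  have hτp : Phi l σ a p = a (σ p) := if_pos hp
  have hτq : Phi l σ a q = a (σ q) := if_pos hq
  have hle : a (σ p) ≤ a (σ q) :=
    a_mono hC (σ p) (syt_mem_Icc hσ hp).1 (σ q) hlt.le (syt_mem_Icc hσ hq).2
  rcases lt_or_eq_of_le hle with h | h
  · rw [key_lt_iff]
    left
    rw [hτp, hτq]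
    exact h
  · have hnd : ∀ j, σ p ≤ j → j < σ q → ¬ Desc l σ j := by
      intro j hj1 hj2 hD
      have := a_strict hC (syt_mem_Icc hσ hp).1 hj1 (by omega) (syt_mem_Icc hσ hq).2 hD
      omega
    have hq1p1 : q.1 ≤ p.1 :=
      rows_mono hσ (σ p) (syt_mem_Icc hσ hp).1 (σ q) hlt.le (syt_mem_Icc hσ hq).2
        hnd p hp q hq rfl rfl
    have hcol : p.2 < q.2 := by
      by_contra hcon
      push_neg at hcon
      rcases eq_or_lt_of_le hcon with h2 | h2
      · rcases eq_or_lt_of_le hq1p1 with h3 | h3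
        · have : q = p := Prod.ext h3 h2
          rw [this] at hlt; omega
        · have : σ q < σ p := hσ.2.2.2 q hq p hp h2 h3
          omega
      · rcases eq_or_lt_of_le hq1p1 with h3 | h3
        · have : σ q < σ p := hσ.2.2.1 q hq p hp h3 h2
          omega
        · have hr : (q.1, p.2) ∈ l.ycells := cell_rect hq hp hq1p1
          have h4 : σ q < σ (q.1, p.2) := hσ.2.2.1 q hq _ hr rfl h2
          have h5 : σ (q.1, p.2) < σ p := hσ.2.2.2 _ hr p hp rfl h3
          omega
    rw [key_lt_iff]
    right
    rw [hτp, hτq, h]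
    exact ⟨rfl, hcol⟩

lemma key_phi_lt_iff (hσ : IsSYT l σ) (hC : Cond n l σ a) :
    ∀ p ∈ l.ycells, ∀ q ∈ l.ycells,
      (key (Phi l σ a) p < key (Phi l σ a) q ↔ σ p < σ q) := by
  intro p hp q hq
  constructor
  · intro h
    by_contra hcon
    push_neg at hcon
    rcases eq_or_lt_of_le hcon with h2 | h2
    · have : q = p := hσ.2.1.2.1 hq hp h2
      rw [this] at h
      exact lt_irrefl _ h
    · have := key_phi_lt hσ hC q hq p hp h2
      exact absurd h (not_lt.mpr this.le)
  · exact key_phi_lt hσ hC p hp q hq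

lemma std_phi (hσ : IsSYT l σ) (hC : Cond n l σ a) : stdOf l (Phi l σ a) = σ := by
  set τ := Phi l σ a with hτdef
  funext p
  by_cases hp : p ∈ l.ycells
  · have hps := syt_mem_Icc hσ hp
    have step1 : (keyF l τ).filter (· ≤ key τ p)
        = ((cellsF l).filter (fun q => σ q ≤ σ p)).image (key τ) := by
      ext x
      constructor
      · intro hx
        rw [Finset.mem_filter] at hx
        obtain ⟨hx1, hx2⟩ := hx
        rw [keyF, Finset.mem_image] at hx1
        obtain ⟨q, hq, rfl⟩ := hx1
        rw [Finset.mem_image]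
        refine ⟨q, Finset.mem_filter.mpr ⟨hq, ?_⟩, rfl⟩
        rcases eq_or_lt_of_le hx2 with h | h
        · by_contra hcon
          push_neg at hcon
          have := key_phi_lt hσ hC p hp q (mem_cellsF.mp hq) hcon
          rw [h] at this
          exact lt_irrefl _ this
        · exact ((key_phi_lt_iff hσ hC q (mem_cellsF.mp hq) p hp).mp h).le
      · intro hx
        rw [Finset.mem_image] at hx
        obtain ⟨q, hq, rfl⟩ := hx
        rw [Finset.mem_filter] at hq
        rw [Finset.mem_filter]
        refine ⟨?_, ?_⟩
        · rw [keyF, Finset.mem_image]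
          exact ⟨q, hq.1, rfl⟩
        · show key τ q ≤ key τ p
          rcases eq_or_lt_of_le hq.2 with h | h
          · have : q = p := hσ.2.1.2.1 (mem_cellsF.mp hq.1) hp h
            rw [this]
          · exact ((key_phi_lt_iff hσ hC q (mem_cellsF.mp hq.1) p hp).mpr h).le
    have hkeyinj : Set.InjOn (key τ) ↑((cellsF l).filter (fun q => σ q ≤ σ p)) := by
      intro x hx y hy hxy
      simp only [Finset.coe_filter, Set.mem_setOf_eq] at hx hy
      have hx' := mem_cellsF.mp hx.1
      have hy' := mem_cellsF.mp hy.1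
      by_contra hne
      have hσne : σ x ≠ σ y := fun h => hne (hσ.2.1.2.1 hx' hy' h)
      rcases lt_or_gt_of_ne hσne with h | h
      · have := key_phi_lt hσ hC x hx' y hy' h
        rw [hxy] at this
        exact lt_irrefl _ this
      · have := key_phi_lt hσ hC y hy' x hx' h
        rw [hxy] at this
        exact lt_irrefl _ this
    have step3 : ((cellsF l).filter (fun q => σ q ≤ σ p)).card = σ p := by
      have himg : ((cellsF l).filter (fun q => σ q ≤ σ p)).image σ = Finset.Icc 1 (σ p) := by
        apply Finset.Subset.antisymm
        · intro m hm
          rw [Finset.mem_image] at hm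
          obtain ⟨q, hq, rfl⟩ := hm
          rw [Finset.mem_filter] at hq
          have := syt_mem_Icc hσ (mem_cellsF.mp hq.1)
          rw [Finset.mem_Icc]
          exact ⟨this.1, hq.2⟩
        · intro m hm
          rw [Finset.mem_Icc] at hm
          obtain ⟨q, hq, hqm⟩ := exists_cell hσ hm.1 (le_trans hm.2 hps.2)
          rw [Finset.mem_image]
          exact ⟨q, Finset.mem_filter.mpr ⟨mem_cellsF.mpr hq, by rw [hqm]; exact hm.2⟩, hqm⟩
      have hinj : Set.InjOn σ ↑((cellsF l).filter (fun q => σ q ≤ σ p)) := by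
        intro x hx y hy hxy
        simp only [Finset.coe_filter, Set.mem_setOf_eq] at hx hy
        exact hσ.2.1.2.1 (mem_cellsF.mp hx.1) (mem_cellsF.mp hy.1) hxy
      rw [← Finset.card_image_of_injOn hinj, himg, Nat.card_Icc]
      omega
    calc stdOf l τ p = rnk (keyF l τ) (key τ p) := if_pos hp
      _ = ((keyF l τ).filter (· ≤ key τ p)).card := rfl
      _ = (((cellsF l).filter (fun q => σ q ≤ σ p)).image (key τ)).card := by rw [step1]
      _ = ((cellsF l).filter (fun q => σ q ≤ σ p)).card := Finset.card_image_of_injOn hkeyinj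
      _ = σ p := step3
  · calc stdOf l τ p = 0 := if_neg hp
      _ = σ p := (hσ.1 p hp).symm

end PhiFacts

/-! ### standardization produces SYT -/

section StdFacts

variable {n : ℕ} {l : Ptn} {τ : ℕ × ℕ → ℕ}

lemma key_injOn (hτ : IsSSYT n l τ) : Set.InjOn (key τ) l.ycells := by
  intro p hp q hq h
  obtain ⟨h1, h2⟩ := key_eq_iff.mp h
  have h3 : p.1 = q.1 := by
    by_contra hne
    rcases lt_or_gt_of_ne hne with h4 | h4
    · have := hτ.2.2.2 p hp q hq h2 h4
      omega
    · have := hτ.2.2.2 q hq p hp h2.symm h4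
      omega
  exact Prod.ext h3 h2

lemma keyF_card (hτ : IsSSYT n l τ) : (keyF l τ).card = l.size := by
  rw [keyF, Finset.card_image_of_injOn (by rw [coe_cellsF]; exact key_injOn hτ), ← size_eq]

lemma key_mem_keyF {p : ℕ × ℕ} (hp : p ∈ l.ycells) : key τ p ∈ keyF l τ :=
  Finset.mem_image_of_mem _ (mem_cellsF.mpr hp)

lemma ssyt_key_lt (hτ : IsSSYT n l τ) {p q : ℕ × ℕ} (hp : p ∈ l.ycells) (hq : q ∈ l.ycells) :
    (p.1 = q.1 ∧ p.2 < q.2) ∨ (p.2 = q.2 ∧ p.1 < q.1) → key τ p < key τ q := by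
  rintro (⟨h1, h2⟩ | ⟨h1, h2⟩)
  · have := hτ.2.2.1 p hp q hq h1 h2.le
    rw [key_lt_iff]
    rcases lt_or_eq_of_le this with h | h
    · exact Or.inl h
    · exact Or.inr ⟨h, h2⟩
  · have := hτ.2.2.2 p hp q hq h1 h2
    rw [key_lt_iff]
    exact Or.inl this

lemma stdOf_isSYT (hτ : IsSSYT n l τ) : IsSYT l (stdOf l τ) := by
  have hkbij : Set.BijOn (key τ) l.ycells ↑(keyF l τ) := by
    refine ⟨fun p hp => by exact_mod_cast key_mem_keyF hp, key_injOn hτ, ?_⟩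
    intro x hx
    have : x ∈ keyF l τ := by exact_mod_cast hx
    rw [keyF, Finset.mem_image] at this
    obtain ⟨q, hq, rfl⟩ := this
    exact ⟨q, mem_cellsF.mp hq, rfl⟩
  have hrbij := rnk_bijOn (keyF l τ)
  have hcomp : Set.BijOn (fun p => rnk (keyF l τ) (key τ p)) l.ycells
      ↑(Finset.Icc 1 (keyF l τ).card) := hrbij.comp hkbij
  have htarget : (↑(Finset.Icc 1 (keyF l τ).card) : Set ℕ) = Set.Icc 1 l.size := by
    rw [keyF_card hτ, Finset.coe_Icc]
  refine ⟨fun p hp => if_neg hp, ?_, ?_, ?_⟩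
  · rw [← htarget]
    apply hcomp.congr
    intro p hp
    exact (if_pos hp).symm
  · intro p hp q hq h1 h2
    simp only [stdOf, if_pos hp, if_pos hq]
    exact rnk_lt_rnk (key_mem_keyF hq) (ssyt_key_lt hτ hp hq (Or.inl ⟨h1, h2⟩))
  · intro p hp q hq h1 h2
    simp only [stdOf, if_pos hp, if_pos hq]
    exact rnk_lt_rnk (key_mem_keyF hq) (ssyt_key_lt hτ hp hq (Or.inr ⟨h1, h2⟩))

lemma stdOf_key_lt (hτ : IsSSYT n l τ) {p q : ℕ × ℕ} (hp : p ∈ l.ycells) (hq : q ∈ l.ycells)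
    (h : stdOf l τ p < stdOf l τ q) : key τ p < key τ q := by
  simp only [stdOf, if_pos hp, if_pos hq] at h
  rcases lt_trichotomy (key τ p) (key τ q) with h1 | h1 | h1
  · exact h1
  · rw [h1] at h
    exact absurd h (lt_irrefl _)
  · have := rnk_lt_rnk (s := keyF l τ) (key_mem_keyF hp) h1
    omega

lemma cond_aOf (hτ : IsSSYT n l τ) :
    Cond n l (stdOf l τ) (aOf l (stdOf l τ) τ) := by
  have hσ := stdOf_isSYT hτ
  set σ := stdOf l τ with hσdef
  refine ⟨?_, ?_, ?_⟩
  · intro k hk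
    simp only [aOf]
    rw [if_neg (by omega)]
  · intro k hk1 hk2
    have hex : ∃ p ∈ l.ycells, σ p = k := exists_cell hσ hk1 hk2
    simp only [aOf]
    rw [if_pos ⟨hk1, hk2⟩]
    exact hτ.2.1 _ (Function.invFunOn_mem hex)
  · intro k hk1 hk2
    have hex1 : ∃ p ∈ l.ycells, σ p = k := exists_cell hσ hk1 (by omega)
    have hex2 : ∃ p ∈ l.ycells, σ p = k + 1 := exists_cell hσ (by omega) hk2
    set p := Function.invFunOn σ l.ycells k with hpdef
    set q := Function.invFunOn σ l.ycells (k + 1) with hqdef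
    have hp : p ∈ l.ycells := Function.invFunOn_mem hex1
    have hq : q ∈ l.ycells := Function.invFunOn_mem hex2
    have hpk : σ p = k := Function.invFunOn_eq hex1
    have hqk : σ q = k + 1 := Function.invFunOn_eq hex2
    have hkey : key τ p < key τ q := by
      apply stdOf_key_lt hτ hp hq
      rw [← hσdef, hpk, hqk]
      omega
    have hτle : τ p ≤ τ q := by
      rcases key_lt_iff.mp hkey with h | h
      · exact h.le
      · exact h.1.le
    have ha1 : aOf l σ τ k = τ p := by
      simp only [aOf]
      rw [if_pos ⟨hk1, by omega⟩]
    have ha2 : aOf l σ τ (k + 1) = τ q := by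
      simp only [aOf]
      rw [if_pos ⟨by omega, hk2⟩]
    constructor
    · rw [ha1, ha2]; exact hτle
    · rintro ⟨p', hp', q', hq', hp'k, hq'k, hlt⟩
      have e1 : p' = p := hσ.2.1.2.1 hp' hp (by rw [hp'k, hpk])
      have e2 : q' = q := hσ.2.1.2.1 hq' hq (by rw [hq'k, hqk])
      rw [e1, e2] at hlt
      rw [ha1, ha2]
      rcases lt_or_eq_of_le hτle with h | h
      · exact h
      · exfalso
        have hcol : p.2 < q.2 := by
          rcases key_lt_iff.mp hkey with h1 | h1
          · omega
          · exact h1.2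
        have hr : (p.1, q.2) ∈ l.ycells := cell_rect hp hq hlt.le
        have h4 : τ p ≤ τ (p.1, q.2) := hτ.2.2.1 p hp _ hr rfl hcol.le
        have h5 : τ (p.1, q.2) < τ q := hτ.2.2.2 _ hr q hq rfl hlt
        omega

lemma phi_aOf (hτ : IsSSYT n l τ) :
    Phi l (stdOf l τ) (aOf l (stdOf l τ) τ) = τ := by
  have hσ := stdOf_isSYT hτ
  set σ := stdOf l τ with hσdef
  funext p
  by_cases hp : p ∈ l.ycells
  · have hps := syt_mem_Icc hσ hp
    calc Phi l σ (aOf l σ τ) p = aOf l σ τ (σ p) := if_pos hp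
      _ = τ (Function.invFunOn σ l.ycells (σ p)) := by
          simp only [aOf]
          rw [if_pos ⟨hps.1, hps.2⟩]
      _ = τ p := by rw [hσ.2.1.2.1.leftInvOn_invFunOn hp]
  · calc Phi l σ (aOf l σ τ) p = 0 := if_neg hp
      _ = τ p := (hτ.1 p hp).symm

end StdFacts

/-! ### recovery of `a` and the fiber bijection -/

section Fiber

variable {n : ℕ} {l : Ptn} {σ : ℕ × ℕ → ℕ} {a : ℕ → ℕ}

lemma aOf_phi (hσ : IsSYT l σ) (hC : Cond n l σ a) : aOf l σ (Phi l σ a) = a := by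
  funext k
  by_cases hk : 1 ≤ k ∧ k ≤ l.size
  · have hex : ∃ p ∈ l.ycells, σ p = k := exists_cell hσ hk.1 hk.2
    calc aOf l σ (Phi l σ a) k = Phi l σ a (Function.invFunOn σ l.ycells k) := by
          simp only [aOf]
          rw [if_pos hk]
      _ = a (σ (Function.invFunOn σ l.ycells k)) := if_pos (Function.invFunOn_mem hex)
      _ = a k := by rw [Function.invFunOn_eq hex]
  · calc aOf l σ (Phi l σ a) k = 0 := by
          simp only [aOf]
          rw [if_neg hk]
      _ = a k := (hC.1 k (by omega)).symm

lemma fiber_bij (n : ℕ) (l : Ptn) {σ : ℕ × ℕ → ℕ} (hσ : IsSYT l σ) :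
    Set.BijOn (Phi l σ) {a | Cond n l σ a} {τ | IsSSYT n l τ ∧ stdOf l τ = σ} := by
  refine ⟨?_, ?_, ?_⟩
  · intro a ha
    exact ⟨phi_isSSYT hσ ha, std_phi hσ ha⟩
  · intro a ha b hb hab
    calc a = aOf l σ (Phi l σ a) := (aOf_phi hσ ha).symm
      _ = aOf l σ (Phi l σ b) := by rw [hab]
      _ = b := aOf_phi hσ hb
  · rintro τ ⟨hτ, hstd⟩
    refine ⟨aOf l σ τ, ?_, ?_⟩
    · have := cond_aOf hτ
      rwa [hstd] at this
    · have := phi_aOf hτ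
      rwa [hstd] at this

end Fiber

/-! ### counting strictly increasing sequences -/

def StrictCond (M N : ℕ) (c : ℕ → ℕ) : Prop :=
  (∀ k : ℕ, k = 0 ∨ N < k → c k = 0) ∧
  (∀ k : ℕ, 1 ≤ k → k ≤ N → 1 ≤ c k ∧ c k ≤ M) ∧
  (∀ k : ℕ, 1 ≤ k → k + 1 ≤ N → c k < c (k + 1))

lemma strict_chain {M N : ℕ} {c : ℕ → ℕ} (h : StrictCond M N c) :
    ∀ k, 1 ≤ k → ∀ k', k ≤ k' → k' ≤ N → c k + (k' - k) ≤ c k' := by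
  intro k hk1 k' hkk'
  induction k', hkk' using Nat.le_induction with
  | base => intro _; omega
  | succ m hm ih =>
    intro hsz
    have h1 := ih (by omega)
    have h2 := h.2.2 m (by omega) (by omega)
    omega

lemma strict_injOn {M N : ℕ} {c : ℕ → ℕ} (h : StrictCond M N c) :
    Set.InjOn c ↑(Finset.Icc 1 N) := by
  intro x hx y hy hxy
  rw [Finset.coe_Icc, Set.mem_Icc] at hx hy
  by_contra hne
  rcases lt_or_gt_of_ne hne with h1 | h1
  · have := strict_chain h x hx.1 y h1.le hy.2
    omega
  · have := strict_chain h y hy.1 x h1.le hx.2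
    omega

noncomputable def embSeq (s : Finset ℕ) (N : ℕ) (hcard : s.card = N) : ℕ → ℕ :=
  fun k => if h : 1 ≤ k ∧ k ≤ N then (s.orderEmbOfFin hcard ⟨k - 1, by omega⟩ : ℕ) else 0

lemma embSeq_pos (s : Finset ℕ) (N : ℕ) (hcard : s.card = N) {k : ℕ}
    (h1 : 1 ≤ k) (h2 : k ≤ N) :
    embSeq s N hcard k = (s.orderEmbOfFin hcard ⟨k - 1, by omega⟩ : ℕ) := by
  simp only [embSeq]
  rw [dif_pos ⟨h1, h2⟩]

lemma embSeq_neg (s : Finset ℕ) (N : ℕ) (hcard : s.card = N) {k : ℕ}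
    (hk : ¬ (1 ≤ k ∧ k ≤ N)) : embSeq s N hcard k = 0 := by
  simp only [embSeq]
  rw [dif_neg hk]

noncomputable def shiftSeq (F : ℕ → ℕ) (N : ℕ) (a : ℕ → ℕ) : ℕ → ℕ :=
  fun k => if 1 ≤ k ∧ k ≤ N then a k + F k else 0

lemma shiftSeq_pos (F : ℕ → ℕ) (N : ℕ) (a : ℕ → ℕ) {k : ℕ} (hk : 1 ≤ k ∧ k ≤ N) :
    shiftSeq F N a k = a k + F k := by
  simp only [shiftSeq]
  rw [if_pos hk]

lemma shiftSeq_neg (F : ℕ → ℕ) (N : ℕ) (a : ℕ → ℕ) {k : ℕ} (hk : ¬ (1 ≤ k ∧ k ≤ N)) :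
    shiftSeq F N a k = 0 := by
  simp only [shiftSeq]
  rw [if_neg hk]

noncomputable def subSeq (F : ℕ → ℕ) (N : ℕ) (c : ℕ → ℕ) : ℕ → ℕ :=
  fun k => if 1 ≤ k ∧ k ≤ N then c k - F k else 0

lemma subSeq_pos (F : ℕ → ℕ) (N : ℕ) (c : ℕ → ℕ) {k : ℕ} (hk : 1 ≤ k ∧ k ≤ N) :
    subSeq F N c k = c k - F k := by
  simp only [subSeq]
  rw [if_pos hk]

lemma subSeq_neg (F : ℕ → ℕ) (N : ℕ) (c : ℕ → ℕ) {k : ℕ} (hk : ¬ (1 ≤ k ∧ k ≤ N)) :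
    subSeq F N c k = 0 := by
  simp only [subSeq]
  rw [if_neg hk]

lemma strict_ncard (M N : ℕ) :
    {c : ℕ → ℕ | StrictCond M N c}.ncard = M.choose N := by
  have hbij : Set.BijOn (fun c : ℕ → ℕ => (Finset.Icc 1 N).image c) {c | StrictCond M N c}
      ↑((Finset.Icc 1 M).powersetCard N) := by
    refine ⟨?_, ?_, ?_⟩
    · intro c hc
      simp only [Set.mem_setOf_eq] at hc
      have hsub : (Finset.Icc 1 N).image c ⊆ Finset.Icc 1 M := by
        intro x hx
        rw [Finset.mem_image] at hx
        obtain ⟨k, hk, rfl⟩ := hx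
        rw [Finset.mem_Icc] at hk ⊢
        exact hc.2.1 k hk.1 hk.2
      have hcard : ((Finset.Icc 1 N).image c).card = N := by
        rw [Finset.card_image_of_injOn (strict_injOn hc), Nat.card_Icc]
        omega
      exact_mod_cast Finset.mem_powersetCard.mpr ⟨hsub, hcard⟩
    · intro c hc c' hc' hcc'
      simp only [Set.mem_setOf_eq] at hc hc'
      have hcc'' : (Finset.Icc 1 N).image c = (Finset.Icc 1 N).image c' := hcc'
      have hcard : ((Finset.Icc 1 N).image c).card = N := by
        rw [Finset.card_image_of_injOn (strict_injOn hc), Nat.card_Icc]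
        omega
      have hmemIcc : ∀ i : Fin N, (i : ℕ) + 1 ∈ Finset.Icc 1 N := by
        intro i
        rw [Finset.mem_Icc]
        have := i.isLt
        omega
      have hf : (fun i : Fin N => c ((i : ℕ) + 1))
          = ((Finset.Icc 1 N).image c).orderEmbOfFin hcard := by
        apply Finset.orderEmbOfFin_unique hcard
        · intro i
          exact Finset.mem_image_of_mem c (hmemIcc i)
        · intro i j hij
          show c ((i : ℕ) + 1) < c ((j : ℕ) + 1)
          have hij' : (i : ℕ) < (j : ℕ) := hij
          have hjN : (j : ℕ) < N := j.isLt
          have := strict_chain hc ((i : ℕ) + 1) (by omega) ((j : ℕ) + 1) (by omega) (by omega)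
          omega
      have hf' : (fun i : Fin N => c' ((i : ℕ) + 1))
          = ((Finset.Icc 1 N).image c).orderEmbOfFin hcard := by
        apply Finset.orderEmbOfFin_unique hcard
        · intro i
          rw [hcc'']
          exact Finset.mem_image_of_mem c' (hmemIcc i)
        · intro i j hij
          show c' ((i : ℕ) + 1) < c' ((j : ℕ) + 1)
          have hij' : (i : ℕ) < (j : ℕ) := hij
          have hjN : (j : ℕ) < N := j.isLt
          have := strict_chain hc' ((i : ℕ) + 1) (by omega) ((j : ℕ) + 1) (by omega) (by omega)
          omega
      funext k
      by_cases hk : 1 ≤ k ∧ k ≤ N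
      · have e1 := congrFun hf (⟨k - 1, by omega⟩ : Fin N)
        have e2 := congrFun hf' (⟨k - 1, by omega⟩ : Fin N)
        simp only at e1 e2
        have hk1 : k - 1 + 1 = k := by omega
        rw [hk1] at e1 e2
        rw [e1, e2]
      · rw [hc.1 k (by omega), hc'.1 k (by omega)]
    · intro s hs
      have hs' : s ∈ (Finset.Icc 1 M).powersetCard N := by exact_mod_cast hs
      rw [Finset.mem_powersetCard] at hs'
      obtain ⟨hsub, hcard⟩ := hs'
      have hcmem : ∀ k, 1 ≤ k → k ≤ N → embSeq s N hcard k ∈ s := by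
        intro k h1 h2
        rw [embSeq_pos s N hcard h1 h2]
        exact Finset.orderEmbOfFin_mem s hcard _
      have hcstrict : StrictCond M N (embSeq s N hcard) := by
        refine ⟨?_, ?_, ?_⟩
        · intro k hk
          exact embSeq_neg s N hcard (by omega)
        · intro k h1 h2
          have := hsub (hcmem k h1 h2)
          rw [Finset.mem_Icc] at this
          exact this
        · intro k h1 h2
          rw [embSeq_pos s N hcard h1 (by omega), embSeq_pos s N hcard (by omega : 1 ≤ k + 1) h2]
          have hlt : (⟨k - 1, by omega⟩ : Fin N) < (⟨k + 1 - 1, by omega⟩ : Fin N) := by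
            rw [Fin.mk_lt_mk]
            omega
          exact (s.orderEmbOfFin hcard).strictMono hlt
      refine ⟨embSeq s N hcard, hcstrict, ?_⟩
      show (Finset.Icc 1 N).image (embSeq s N hcard) = s
      apply Finset.eq_of_subset_of_card_le
      · intro x hx
        rw [Finset.mem_image] at hx
        obtain ⟨k, hk, rfl⟩ := hx
        rw [Finset.mem_Icc] at hk
        exact hcmem k hk.1 hk.2
      · rw [Finset.card_image_of_injOn (strict_injOn hcstrict), Nat.card_Icc, hcard]
        omega
  calc {c : ℕ → ℕ | StrictCond M N c}.ncard
      = ((fun c : ℕ → ℕ => (Finset.Icc 1 N).image c) '' {c | StrictCond M N c}).ncard :=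
        (Set.ncard_image_of_injOn hbij.injOn).symm
    _ = (↑((Finset.Icc 1 M).powersetCard N) : Set (Finset ℕ)).ncard := by rw [hbij.image_eq]
    _ = ((Finset.Icc 1 M).powersetCard N).card := Set.ncard_coe_finset _
    _ = (Finset.Icc 1 M).card.choose N := Finset.card_powersetCard _ _
    _ = M.choose N := by rw [Nat.card_Icc]; simp

/-! ### the ascent finset -/

noncomputable def ascF (l : Ptn) (σ : ℕ × ℕ → ℕ) : Finset ℕ :=
  (Finset.Ico 1 l.size).filter (Asc l σ)

lemma ascents_eq (l : Ptn) (σ : ℕ × ℕ → ℕ) : ascents l σ = (ascF l σ).card := by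
  rw [ascents, ← Set.ncard_coe_finset]
  congr 1
  ext k
  simp only [ascF, Finset.coe_filter, Set.mem_setOf_eq, Finset.mem_Ico, Asc]
  constructor
  · rintro ⟨h1, h2, h3⟩
    exact ⟨⟨h1, h2⟩, h3⟩
  · rintro ⟨⟨h1, h2⟩, h3⟩
    exact ⟨h1, h2, h3⟩

/-! ### counting the condition set -/

lemma cond_ncard {l : Ptn} {σ : ℕ × ℕ → ℕ} (n : ℕ) (hσ : IsSYT l σ) :
    {a : ℕ → ℕ | Cond n l σ a}.ncard = (n + (ascF l σ).card).choose l.size := by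
  set N := l.size with hNdef
  set A := ascF l σ with hAdef
  set M := n + A.card with hMdef
  set F : ℕ → ℕ := fun k => (A.filter (· < k)).card with hFdef
  have hFk : ∀ k, F k = (A.filter (· < k)).card := fun k => by rw [hFdef]
  have hAmem : ∀ k, k ∈ A ↔ (1 ≤ k ∧ k < N ∧ Asc l σ k) := by
    intro k
    rw [hAdef, ascF, Finset.mem_filter, Finset.mem_Ico, ← hNdef]
    tauto
  have hFstep : ∀ k, F (k + 1) = F k + (if k ∈ A then 1 else 0) := by
    intro k
    have h1 : A.filter (· < k + 1) = A.filter (fun x => x < k ∨ x = k) := by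
      apply Finset.filter_congr
      intro x _
      omega
    have hdisj : Disjoint (A.filter (· < k)) (A.filter (fun x => x = k)) := by
      rw [Finset.disjoint_left]
      intro x hx hx'
      rw [Finset.mem_filter] at hx hx'
      omega
    rw [hFk (k + 1), hFk k, h1, Finset.filter_or, Finset.card_union_of_disjoint hdisj,
      Finset.filter_eq']
    split <;> simp
  have hFle : ∀ k, F k ≤ k - 1 := by
    intro k
    rw [hFk k]
    calc (A.filter (· < k)).card ≤ (Finset.Icc 1 (k - 1)).card := by
          apply Finset.card_le_card
          intro x hx
          rw [Finset.mem_filter] at hx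
          have := (hAmem x).mp hx.1
          rw [Finset.mem_Icc]
          omega
      _ = k - 1 := by rw [Nat.card_Icc]; omega
  have hAbound : ∀ k, A.card ≤ F k + (N - k) := by
    intro k
    have hsplit := Finset.card_filter_add_card_filter_not
      (s := A) (p := (· < k))
    have hle : (A.filter (fun x => ¬ x < k)).card ≤ (Finset.Ico k N).card := by
      apply Finset.card_le_card
      intro x hx
      rw [Finset.mem_filter] at hx
      have := (hAmem x).mp hx.1
      rw [Finset.mem_Ico]
      omega
    rw [Nat.card_Ico] at hle
    rw [hFk k]
    omega
  have hFA : ∀ k, F k ≤ A.card := by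
    intro k
    rw [hFk k]
    exact Finset.card_le_card (Finset.filter_subset _ _)
  have hdescA : ∀ k, 1 ≤ k → k + 1 ≤ N → (k ∈ A ↔ ¬ Desc l σ k) := by
    intro k h1 h2
    rcases asc_or_desc hσ h1 h2 with ⟨ha, hd⟩ | ⟨hd, ha⟩
    · exact ⟨fun _ => hd, fun _ => (hAmem k).mpr ⟨h1, by omega, ha⟩⟩
    · constructor
      · intro hk
        exact absurd ((hAmem k).mp hk).2.2 ha
      · intro h
        exact absurd hd h
  have hbij : Set.BijOn (shiftSeq F N) {a | Cond n l σ a} {c | StrictCond M N c} := by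
    refine ⟨?_, ?_, ?_⟩
    · intro a ha
      simp only [Set.mem_setOf_eq] at ha ⊢
      refine ⟨?_, ?_, ?_⟩
      · intro k hk
        exact shiftSeq_neg F N a (by omega)
      · intro k h1 h2
        rw [shiftSeq_pos F N a ⟨h1, h2⟩]
        have hb := ha.2.1 k h1 h2
        have := hFA k
        omega
      · intro k h1 h2
        rw [shiftSeq_pos F N a ⟨h1, by omega⟩, shiftSeq_pos F N a ⟨by omega, h2⟩]
        have hstep := hFstep k
        have hmono := (ha.2.2 k h1 h2).1
        by_cases hk : k ∈ A
        · rw [if_pos hk] at hstep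
          omega
        · have hD : Desc l σ k := by
            by_contra hD
            exact hk ((hdescA k h1 h2).mpr hD)
          have := (ha.2.2 k h1 h2).2 hD
          rw [if_neg hk] at hstep
          omega
    · intro a ha b hb hab
      simp only [Set.mem_setOf_eq] at ha hb
      funext k
      by_cases hk : 1 ≤ k ∧ k ≤ N
      · have h := congrFun hab k
        rw [shiftSeq_pos F N a hk, shiftSeq_pos F N b hk] at h
        omega
      · rw [ha.1 k (by omega), hb.1 k (by omega)]
    · intro c hc
      simp only [Set.mem_setOf_eq] at hc
      have hck : ∀ k, 1 ≤ k → k ≤ N → k ≤ c k := by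
        intro k h1 h2
        have hch := strict_chain hc 1 le_rfl k h1 h2
        have hb := (hc.2.1 1 le_rfl (by omega)).1
        omega
      have hcbound : ∀ k, 1 ≤ k → k ≤ N → c k + (N - k) ≤ M := by
        intro k h1 h2
        have hch := strict_chain hc k h1 N h2 le_rfl
        have hb := (hc.2.1 N (by omega) le_rfl).2
        omega
      refine ⟨subSeq F N c, ?_, ?_⟩
      · simp only [Set.mem_setOf_eq]
        refine ⟨?_, ?_, ?_⟩
        · intro k hk
          exact subSeq_neg F N c (by omega)
        · intro k h1 h2
          rw [subSeq_pos F N c ⟨h1, h2⟩]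
          have hF := hFle k
          have hk := hck k h1 h2
          have hb := hcbound k h1 h2
          have hA := hAbound k
          constructor
          · omega
          · omega
        · intro k h1 h2
          rw [subSeq_pos F N c ⟨h1, by omega⟩, subSeq_pos F N c ⟨by omega, h2⟩]
          have hstep := hFstep k
          have hstrict := hc.2.2 k h1 h2
          have hF1 := hFle k
          have hF2 := hFle (k + 1)
          have hk1 := hck k h1 (by omega)
          have hk2 := hck (k + 1) (by omega) h2
          constructor
          · by_cases hk : k ∈ A
            · rw [if_pos hk] at hstep
              omega
            · rw [if_neg hk] at hstep
              omega
          · intro hD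
            have hnA : k ∉ A := fun hkA => ((hdescA k h1 h2).mp hkA) hD
            rw [if_neg hnA] at hstep
            omega
      · funext k
        by_cases hk : 1 ≤ k ∧ k ≤ N
        · rw [shiftSeq_pos F N _ hk, subSeq_pos F N c hk]
          have hF := hFle k
          have := hck k hk.1 hk.2
          omega
        · rw [shiftSeq_neg F N _ hk]
          exact (hc.1 k (by omega)).symm
  calc {a : ℕ → ℕ | Cond n l σ a}.ncard
      = ((shiftSeq F N) '' {a | Cond n l σ a}).ncard :=
        (Set.ncard_image_of_injOn hbij.injOn).symm
    _ = {c : ℕ → ℕ | StrictCond M N c}.ncard := by rw [hbij.image_eq]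
    _ = M.choose N := strict_ncard M N

/-! ### finiteness -/

lemma funcs_finite {β : Type*} (S : Set β) (hS : S.Finite) (B : ℕ) :
    {f : β → ℕ | (∀ x, x ∉ S → f x = 0) ∧ ∀ x ∈ S, f x ≤ B}.Finite := by
  have := hS.to_subtype
  rw [← Set.finite_coe_iff]
  refine Finite.of_injective
    (fun f : {f : β → ℕ | (∀ x, x ∉ S → f x = 0) ∧ ∀ x ∈ S, f x ≤ B} =>
      (fun x : S => (⟨f.1 x, Nat.lt_succ_of_le (f.2.2 x x.2)⟩ : Fin (B + 1)))) ?_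
  intro f g h
  apply Subtype.ext
  funext x
  by_cases hx : x ∈ S
  · have := congrFun h ⟨x, hx⟩
    exact congrArg Fin.val this
  · rw [f.2.1 x hx, g.2.1 x hx]

lemma ssyt_finite (n : ℕ) (l : Ptn) : {τ : ℕ × ℕ → ℕ | IsSSYT n l τ}.Finite := by
  apply (funcs_finite l.ycells (ycells_finite l) n).subset
  intro τ hτ
  exact ⟨hτ.1, fun p hp => (hτ.2.1 p hp).2⟩

lemma syt_finite (l : Ptn) : {σ : ℕ × ℕ → ℕ | IsSYT l σ}.Finite := by
  apply (funcs_finite l.ycells (ycells_finite l) l.size).subset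
  intro σ hσ
  exact ⟨hσ.1, fun p hp => (syt_mem_Icc hσ hp).2⟩

end S19

/-- The number of semistandard Young tableaux of shape `λ` with entries in `[1,n]`
equals `∑_{σ ∈ SYT(λ)} C(n + 𝒜(σ), |λ|)`. -/
theorem statement19 (n : ℕ) (hn : 0 < n) (lam : Ptn) :
    {τ : ℕ × ℕ → ℕ | IsSSYT n lam τ}.ncard
      = ∑ᶠ σ ∈ {σ : ℕ × ℕ → ℕ | IsSYT lam σ},
          Nat.choose (n + ascents lam σ) lam.size := by
  classical
  have hSYT := S19.syt_finite lam
  have hSSYT := S19.ssyt_finite n lam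
  rw [← hSYT.coe_toFinset, finsum_mem_coe_finset]
  rw [Set.ncard_eq_toFinset_card _ hSSYT]
  rw [Finset.card_eq_sum_card_fiberwise (f := S19.stdOf lam) (t := hSYT.toFinset)
    (fun τ hτ => by
      rw [Finset.mem_coe, Set.Finite.mem_toFinset] at hτ ⊢
      exact S19.stdOf_isSYT hτ)]
  apply Finset.sum_congr rfl
  intro σ hσmem
  rw [Set.Finite.mem_toFinset] at hσmem
  have hσ : IsSYT lam σ := hσmem
  have h1 : (↑(hSSYT.toFinset.filter (fun τ => S19.stdOf lam τ = σ)) : Set (ℕ × ℕ → ℕ))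
      = {τ | IsSSYT n lam τ ∧ S19.stdOf lam τ = σ} := by
    ext τ
    simp only [Finset.coe_filter, Set.mem_setOf_eq, Set.Finite.mem_toFinset]
  calc (hSSYT.toFinset.filter (fun τ => S19.stdOf lam τ = σ)).card
      = {τ | IsSSYT n lam τ ∧ S19.stdOf lam τ = σ}.ncard := by
        rw [← h1, Set.ncard_coe_finset]
    _ = {a : ℕ → ℕ | S19.Cond n lam σ a}.ncard := by
        rw [← (S19.fiber_bij n lam hσ).image_eq,
          Set.ncard_image_of_injOn (S19.fiber_bij n lam hσ).injOn]
    _ = (n + (S19.ascF lam σ).card).choose lam.size := S19.cond_ncard n hσ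
    _ = (n + ascents lam σ).choose lam.size := by rw [S19.ascents_eq]
end
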